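/- arXiv:1412.5374 — 5 statements merged into one kernel-verified Lean document; each statement's English description precedes it below -/
import Mathlib

section
/- Let n ≥ 1, s ≥ 1, ρ > 0, ε > 0 with s ≥ 2log₂(1/ρ) + log₂ n + log₂(1 + (1/n)log₂(1/ε)) + 2. If the keystream bits G_i(k), i ∈ [1:n], k ∈ [1:2ˢ], are i.i.d. Bernoulli(1/2), then with probability greater than 1−ε (over the random choice of keystream generator), the binary additive stream cipher C = M ⊕ G(K) with M uniform on {0,1}ⁿ and K uniform on [1:2ˢ] satisfies ρ_m(M;C) ≤ ρ. -/
open BigOperators Finset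
open scoped Classical

/-- Hirschfeld–Gebelein–Rényi maximal correlation of a joint pmf `p` on `X × Y`:
the supremum of `E[f(X) g(Y)]` over zero-mean, unit-second-moment `f`, `g`
(`sSup ∅ = 0` if no such functions exist). -/
noncomputable def maxCorr {X Y : Type*} [Fintype X] [Fintype Y] (p : X → Y → ℝ) : ℝ :=
  sSup {r : ℝ | ∃ f : X → ℝ, ∃ g : Y → ℝ,
    (∑ x, ∑ y, p x y * f x) = 0 ∧
    (∑ x, ∑ y, p x y * g y) = 0 ∧
    (∑ x, ∑ y, p x y * (f x) ^ 2) = 1 ∧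
    (∑ x, ∑ y, p x y * (g y) ^ 2) = 1 ∧
    r = ∑ x, ∑ y, p x y * f x * g y}

/-- Spectral (operator) norm of a real matrix. -/
noncomputable def specNorm {X Y : Type*} [Fintype X] [Fintype Y] (B : Matrix X Y ℝ) : ℝ :=
  sSup {r : ℝ | ∃ v : Y → ℝ, (∑ y, (v y) ^ 2) = 1 ∧
    r = Real.sqrt (∑ x, (B.mulVec v x) ^ 2)}

namespace SC

/-- real sign of a bit -/
def sgn (a : ZMod 2) : ℝ := if a = 0 then 1 else -1

lemma sgn_zero : sgn 0 = 1 := rfl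

lemma sgn_add (a b : ZMod 2) : sgn (a + b) = sgn a * sgn b := by
  have h : ∀ x : ZMod 2, x = 0 ∨ x = 1 := by decide
  rcases h a with ha | ha <;> rcases h b with hb | hb <;>
    simp [ha, hb, sgn, show (1 + 1 : ZMod 2) = 0 by decide]

lemma sgn_sum {ι : Type*} (t : Finset ι) (f : ι → ZMod 2) :
    sgn (∑ i ∈ t, f i) = ∏ i ∈ t, sgn (f i) := by
  induction t using Finset.induction_on with
  | empty => simp [sgn_zero]
  | insert a t' hx ih => rw [Finset.sum_insert hx, Finset.prod_insert hx, sgn_add, ih]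

variable {n : ℕ}

/-- character -/
def χ (v x : Fin n → ZMod 2) : ℝ := sgn (∑ i, v i * x i)

lemma chi_add (v x y : Fin n → ZMod 2) : χ v (x + y) = χ v x * χ v y := by
  unfold χ
  rw [← sgn_add, ← Finset.sum_add_distrib]
  congr 1
  exact Finset.sum_congr rfl fun i _ => by simp [mul_add]

lemma chi_zero (v : Fin n → ZMod 2) : χ v 0 = 1 := by
  unfold χ; simp [sgn_zero]

lemma sum_chi (x : Fin n → ZMod 2) :
    ∑ v : Fin n → ZMod 2, χ v x = if x = 0 then (2 : ℝ) ^ n else 0 := by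
  have h1 : ∀ v : Fin n → ZMod 2, χ v x = ∏ i, sgn (v i * x i) := fun v =>
    sgn_sum univ fun i => v i * x i
  simp_rw [h1]
  rw [← Fintype.piFinset_univ, Finset.sum_prod_piFinset univ (fun i a => sgn (a * x i))]
  have h2 : ∀ i, ∑ a : ZMod 2, sgn (a * x i) = 1 + sgn (x i) := by
    intro i
    rw [show (univ : Finset (ZMod 2)) = {0, 1} by decide]
    simp [sgn_zero]
  simp_rw [h2]
  by_cases hx : x = 0
  · subst hx; norm_num [sgn_zero]
  · rw [if_neg hx]
    obtain ⟨i, hi⟩ := Function.ne_iff.mp hx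
    refine Finset.prod_eq_zero (Finset.mem_univ i) ?_
    have h01 : ∀ a : ZMod 2, a ≠ 0 → a = 1 := by decide
    have : x i = 1 := h01 _ hi
    simp [this, sgn]


lemma self_add_self (x : Fin n → ZMod 2) : x + x = 0 := by
  funext i
  have : ∀ a : ZMod 2, a + a = 0 := by decide
  exact this (x i)

/-- convolution identity -/
lemma conv (f g : (Fin n → ZMod 2) → ℝ) (a : Fin n → ZMod 2) :
    ∑ v : Fin n → ZMod 2, (∑ m, f m * χ v m) * (∑ c, g c * χ v c) * χ v a
      = (2 : ℝ) ^ n * ∑ m, f m * g (m + a) := by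
  have step1 : ∀ v : Fin n → ZMod 2,
      (∑ m, f m * χ v m) * (∑ c, g c * χ v c) * χ v a
        = ∑ m, ∑ c, f m * g c * χ v (m + (c + a)) := by
    intro v
    rw [Finset.sum_mul_sum, Finset.sum_mul]
    refine Finset.sum_congr rfl fun m _ => ?_
    rw [Finset.sum_mul]
    refine Finset.sum_congr rfl fun c _ => ?_
    rw [chi_add, chi_add]; ring
  simp_rw [step1]
  rw [Finset.sum_comm]
  have step2 : ∀ m : Fin n → ZMod 2,
      ∑ v : Fin n → ZMod 2, ∑ c, f m * g c * χ v (m + (c + a))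
        = (2 : ℝ) ^ n * (f m * g (m + a)) := by
    intro m
    rw [Finset.sum_comm]
    have inner : ∀ c : Fin n → ZMod 2,
        ∑ v : Fin n → ZMod 2, f m * g c * χ v (m + (c + a))
          = f m * g c * (if c = m + a then (2 : ℝ) ^ n else 0) := by
      intro c
      rw [← Finset.mul_sum, sum_chi]
      congr 1
      have hiff : (m + (c + a) = 0) ↔ c = m + a := by
        constructor
        · intro h
          have h2 : m + (m + (c + a)) = m + 0 := by rw [h]
          rw [← add_assoc, self_add_self, zero_add, add_zero] at h2
          rw [← h2, add_assoc, self_add_self, add_zero]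
        · intro h
          rw [h, show m + (m + a + a) = (m + m) + (a + a) by ring, self_add_self,
            self_add_self, add_zero]
      simp [hiff]
    simp_rw [inner, mul_ite, mul_zero]
    rw [Finset.sum_ite_eq' univ (m + a) (fun c => f m * g c * (2:ℝ)^n)]
    simp [mul_comm, mul_assoc, mul_left_comm]
  simp_rw [step2]
  rw [← Finset.mul_sum]

/-- Parseval -/
lemma parseval (f : (Fin n → ZMod 2) → ℝ) :
    ∑ v : Fin n → ZMod 2, (∑ m, f m * χ v m) ^ 2 = (2 : ℝ) ^ n * ∑ m, (f m) ^ 2 := by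
  have h := conv f f 0
  simp_rw [chi_zero, mul_one, add_zero, ← sq] at h
  exact h


lemma chi_zero_left (x : Fin n → ZMod 2) : χ 0 x = 1 := by
  unfold χ; simp [sgn_zero]

lemma maxCorr_le_of_eps (s : ℕ) (G : Fin (2 ^ s) → Fin n → ZMod 2) (ρ : ℝ) (hρ : 0 ≤ ρ)
    (h : ∀ v : Fin n → ZMod 2, v ≠ 0 → |∑ k, χ v (G k)| ≤ ρ * 2 ^ s) :
    maxCorr (fun (m c : Fin n → ZMod 2) =>
      ((2 ^ n : ℝ))⁻¹ * ((2 ^ s : ℝ))⁻¹ *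
        ((univ.filter fun k => m + G k = c).card : ℝ)) ≤ ρ := by
  refine Real.sSup_le ?_ hρ
  rintro r ⟨f, g, hf0, hg0, hf2, hg2, hr⟩
  simp only at hf0 hg0 hf2 hg2 hr
  have h2n : (0:ℝ) < 2 ^ n := by positivity
  have h2s : (0:ℝ) < 2 ^ s := by positivity
  have hcard : ∀ m c : Fin n → ZMod 2,
      (((univ.filter fun k => m + G k = c).card : ℕ) : ℝ)
        = ∑ k, if m + G k = c then (1:ℝ) else 0 := by
    intro m c; rw [Finset.card_filter]; push_cast; rfl
  have hsum : ∀ φ : (Fin n → ZMod 2) → (Fin n → ZMod 2) → ℝ,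
      (∑ m, ∑ c, ((2 ^ n : ℝ))⁻¹ * ((2 ^ s : ℝ))⁻¹ *
          ((univ.filter fun k => m + G k = c).card : ℝ) * φ m c)
        = ((2 ^ n : ℝ))⁻¹ * ((2 ^ s : ℝ))⁻¹ * ∑ k, ∑ m, φ m (m + G k) := by
    intro φ
    have h1 : ∀ m c : Fin n → ZMod 2,
        ((2 ^ n : ℝ))⁻¹ * ((2 ^ s : ℝ))⁻¹ *
            ((univ.filter fun k => m + G k = c).card : ℝ) * φ m c
          = ((2 ^ n : ℝ))⁻¹ * ((2 ^ s : ℝ))⁻¹ *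
              ∑ k, (if m + G k = c then φ m c else 0) := by
      intro m c
      rw [hcard, mul_assoc, Finset.sum_mul]
      congr 1
      refine Finset.sum_congr rfl fun k _ => ?_
      by_cases hk : m + G k = c <;> simp [hk]
    simp_rw [h1, ← Finset.mul_sum]
    congr 1
    have h2 : ∀ m : Fin n → ZMod 2,
        ∑ c, ∑ k, (if m + G k = c then φ m c else 0) = ∑ k, φ m (m + G k) := by
      intro m
      rw [Finset.sum_comm]
      refine Finset.sum_congr rfl fun k _ => ?_
      simp
    simp_rw [h2]
    rw [Finset.sum_comm]
  -- translate constraints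
  have hreidx : ∀ (u : (Fin n → ZMod 2) → ℝ) (a : Fin n → ZMod 2),
      ∑ m, u (m + a) = ∑ c, u c := fun u a =>
    Fintype.sum_equiv (Equiv.addRight a) _ _ (fun m => rfl)
  have hAne : ((2 ^ n : ℝ))⁻¹ * ((2 ^ s : ℝ))⁻¹ ≠ 0 := by positivity
  have hfmean : ∑ m, f m = 0 := by
    rw [hsum (fun m c => f m)] at hf0
    simp only [Finset.sum_const, Finset.card_univ, Fintype.card_fin, nsmul_eq_mul] at hf0
    have := mul_eq_zero.mp hf0
    rcases this with h' | h'
    · exact absurd h' hAne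
    · rcases mul_eq_zero.mp h' with h'' | h''
      · exact absurd h'' (by positivity)
      · exact h''
  have hgmean : ∑ c, g c = 0 := by
    rw [hsum (fun m c => g c)] at hg0
    simp_rw [hreidx g] at hg0
    simp only [Finset.sum_const, Finset.card_univ, Fintype.card_fin, nsmul_eq_mul] at hg0
    rcases mul_eq_zero.mp hg0 with h' | h'
    · exact absurd h' hAne
    · rcases mul_eq_zero.mp h' with h'' | h''
      · exact absurd h'' (by positivity)
      · exact h''
  have hfsq : ∑ m, (f m) ^ 2 = 2 ^ n := by
    rw [hsum (fun m c => (f m) ^ 2)] at hf2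
    simp only [Finset.sum_const, Finset.card_univ, Fintype.card_fin, nsmul_eq_mul] at hf2
    field_simp at hf2
    exact mul_left_cancel₀ (ne_of_gt h2s) (by push_cast at hf2; linarith)
  have hgsq : ∑ c, (g c) ^ 2 = 2 ^ n := by
    rw [hsum (fun m c => (g c) ^ 2)] at hg2
    simp_rw [hreidx (fun c => (g c)^2)] at hg2
    simp only [Finset.sum_const, Finset.card_univ, Fintype.card_fin, nsmul_eq_mul] at hg2
    field_simp at hg2
    exact mul_left_cancel₀ (ne_of_gt h2s) (by push_cast at hg2; linarith)
  -- Fourier coefficients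
  set F : (Fin n → ZMod 2) → ℝ := fun v => ∑ m, f m * χ v m with hF
  set Gc : (Fin n → ZMod 2) → ℝ := fun v => ∑ c, g c * χ v c with hGc
  have hconv : ∀ a, ∑ m, f m * g (m + a)
      = ((2:ℝ) ^ n)⁻¹ * ∑ v, F v * Gc v * χ v a := by
    intro a
    rw [show ∑ v, F v * Gc v * χ v a
        = (2:ℝ) ^ n * ∑ m, f m * g (m + a) from conv f g a]
    field_simp
  have hrval : r = ((2:ℝ)^n)⁻¹ * ((2:ℝ)^s)⁻¹ * ((2:ℝ)^n)⁻¹ *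
      ∑ v, F v * Gc v * (∑ k, χ v (G k)) := by
    have hr' : r = ∑ m, ∑ c, ((2 ^ n : ℝ))⁻¹ * ((2 ^ s : ℝ))⁻¹ *
        ((univ.filter fun k => m + G k = c).card : ℝ) * (f m * g c) := by
      rw [hr]
      exact Finset.sum_congr rfl fun m _ => Finset.sum_congr rfl fun c _ => by ring
    rw [hr', hsum (fun m c => f m * g c)]
    simp_rw [hconv, ← Finset.mul_sum]
    rw [mul_assoc (((2:ℝ)^n)⁻¹ * ((2:ℝ)^s)⁻¹) (((2:ℝ)^n)⁻¹)]
    congr 1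
    congr 1
    rw [Finset.sum_comm]
    exact Finset.sum_congr rfl fun v _ => by rw [← Finset.mul_sum]
  -- the final bound
  set S : (Fin n → ZMod 2) → ℝ := fun v => ∑ k, χ v (G k) with hS
  have hF0 : F 0 = 0 := by
    rw [hF]
    simp only [chi_zero_left, mul_one]
    exact hfmean
  have hterm : ∀ v : Fin n → ZMod 2, |F v * Gc v * S v| ≤ |F v| * |Gc v| * (ρ * 2 ^ s) := by
    intro v
    by_cases hv : v = 0
    · subst hv
      simp [hF0]
    · rw [abs_mul, abs_mul]
      exact mul_le_mul_of_nonneg_left (h v hv)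
        (mul_nonneg (abs_nonneg _) (abs_nonneg _))
  have hcs : ∑ v, |F v| * |Gc v| ≤ (2:ℝ) ^ n * (2:ℝ) ^ n := by
    have h1 : (∑ v, |F v| * |Gc v|) ^ 2 ≤ ((2:ℝ) ^ n * (2:ℝ) ^ n) ^ 2 := by
      calc (∑ v, |F v| * |Gc v|) ^ 2
          ≤ (∑ v, |F v| ^ 2) * (∑ v, |Gc v| ^ 2) :=
            Finset.sum_mul_sq_le_sq_mul_sq univ _ _
        _ = (∑ v, (F v) ^ 2) * (∑ v, (Gc v) ^ 2) := by simp [sq_abs]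
        _ = ((2:ℝ) ^ n * 2 ^ n) * ((2:ℝ) ^ n * 2 ^ n) := by
            rw [hF, hGc]
            rw [parseval f, parseval g, hfsq, hgsq]
        _ = ((2:ℝ) ^ n * (2:ℝ) ^ n) ^ 2 := by ring
    have hnn : 0 ≤ ∑ v, |F v| * |Gc v| := Finset.sum_nonneg fun v _ => mul_nonneg (abs_nonneg _) (abs_nonneg _)
    calc ∑ v, |F v| * |Gc v| = Real.sqrt ((∑ v, |F v| * |Gc v|) ^ 2) :=
          (Real.sqrt_sq hnn).symm
      _ ≤ Real.sqrt (((2:ℝ) ^ n * (2:ℝ) ^ n) ^ 2) := Real.sqrt_le_sqrt h1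
      _ = (2:ℝ) ^ n * (2:ℝ) ^ n := Real.sqrt_sq (by positivity)
  have hSb : |∑ v, F v * Gc v * S v| ≤ ρ * 2 ^ s * ((2:ℝ) ^ n * (2:ℝ) ^ n) := by
    calc |∑ v, F v * Gc v * S v| ≤ ∑ v, |F v * Gc v * S v| :=
          Finset.abs_sum_le_sum_abs _ _
      _ ≤ ∑ v, |F v| * |Gc v| * (ρ * 2 ^ s) := Finset.sum_le_sum fun v _ => hterm v
      _ = (∑ v, |F v| * |Gc v|) * (ρ * 2 ^ s) := by rw [← Finset.sum_mul]
      _ ≤ ((2:ℝ) ^ n * (2:ℝ) ^ n) * (ρ * 2 ^ s) :=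
          mul_le_mul_of_nonneg_right hcs (mul_nonneg hρ (le_of_lt h2s))
      _ = ρ * 2 ^ s * ((2:ℝ) ^ n * (2:ℝ) ^ n) := by ring
  have habs : |r| ≤ ρ := by
    have : |r| = ((2:ℝ)^n)⁻¹ * ((2:ℝ)^s)⁻¹ * ((2:ℝ)^n)⁻¹ * |∑ v, F v * Gc v * S v| := by
      rw [hrval, abs_mul]
      congr 1
      rw [abs_of_nonneg (by positivity : (0:ℝ) ≤ ((2:ℝ)^n)⁻¹ * ((2:ℝ)^s)⁻¹ * ((2:ℝ)^n)⁻¹)]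
    rw [this]
    calc ((2:ℝ)^n)⁻¹ * ((2:ℝ)^s)⁻¹ * ((2:ℝ)^n)⁻¹ * |∑ v, F v * Gc v * S v|
        ≤ ((2:ℝ)^n)⁻¹ * ((2:ℝ)^s)⁻¹ * ((2:ℝ)^n)⁻¹ * (ρ * 2 ^ s * ((2:ℝ) ^ n * (2:ℝ) ^ n)) :=
          mul_le_mul_of_nonneg_left hSb (by positivity)
      _ = ρ := by field_simp
  exact le_trans (le_abs_self r) habs

lemma balanced (hn : 1 ≤ n) {v : Fin n → ZMod 2} (hv : v ≠ 0) (h : ZMod 2 → ℝ) :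
    ∑ a : Fin n → ZMod 2, h (∑ j, v j * a j) = 2 ^ (n - 1) * (h 0 + h 1) := by
  classical
  have h01 : ∀ b : ZMod 2, b ≠ 0 → b = 1 := by decide
  obtain ⟨i, hi⟩ := Function.ne_iff.mp hv
  have hvi : v i = 1 := h01 _ (by simpa using hi)
  set e : Fin n → ZMod 2 := Pi.single i 1 with he
  have hsum_e : (∑ j, v j * e j) = 1 := by
    rw [he]
    simp only [Pi.single_apply, mul_ite, mul_one, mul_zero]
    rw [Finset.sum_ite_eq' univ i v]
    simp [hvi]
  have hflip : ∀ a : Fin n → ZMod 2, (∑ j, v j * (a + e) j) = (∑ j, v j * a j) + 1 := by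
    intro a
    simp only [Pi.add_apply, mul_add]
    rw [Finset.sum_add_distrib, hsum_e]
  have hee : e + e = 0 := self_add_self e
  have hne10 : (1 : ZMod 2) ≠ 0 := by decide
  have hcards : (univ.filter fun a : Fin n → ZMod 2 => (∑ j, v j * a j) = 0).card
      = (univ.filter fun a : Fin n → ZMod 2 => ¬ ((∑ j, v j * a j) = 0)).card := by
    apply Finset.card_bij' (fun a _ => a + e) (fun a _ => a + e)
    · intro a ha
      simp only [Finset.mem_filter, Finset.mem_univ, true_and] at ha ⊢
      rw [hflip, ha, zero_add]
      exact hne10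
    · intro a ha
      simp only [Finset.mem_filter, Finset.mem_univ, true_and] at ha ⊢
      rw [hflip, h01 _ ha]
      decide
    · intro a _; rw [add_assoc, hee, add_zero]
    · intro a _; rw [add_assoc, hee, add_zero]
  have htot := Finset.card_filter_add_card_filter_not
    (s := (univ : Finset (Fin n → ZMod 2)))
    (p := fun a => (∑ j, v j * a j) = 0)
  rw [Finset.card_univ, show Fintype.card (Fin n → ZMod 2) = 2 ^ n by
    simp [Fintype.card_fun]] at htot
  have hcard0 : (univ.filter fun a : Fin n → ZMod 2 => (∑ j, v j * a j) = 0).card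
      = 2 ^ (n - 1) := by
    have hpow : 2 ^ n = 2 * 2 ^ (n - 1) := by
      conv_lhs => rw [show n = (n - 1) + 1 from (Nat.sub_add_cancel hn).symm]
      rw [pow_succ]; ring
    have h2 : 2 * (univ.filter fun a : Fin n → ZMod 2 => (∑ j, v j * a j) = 0).card
        = 2 * 2 ^ (n - 1) := by
      rw [← hpow, ← htot, hcards]
      ring
    exact Nat.eq_of_mul_eq_mul_left (by norm_num) h2
  have hval0 : ∑ a ∈ (univ.filter fun a : Fin n → ZMod 2 => (∑ j, v j * a j) = 0),
      h (∑ j, v j * a j) = (2 ^ (n - 1) : ℕ) * h 0 := by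
    rw [Finset.sum_congr rfl (fun a ha => by rw [(Finset.mem_filter.mp ha).2]),
      Finset.sum_const, hcard0, nsmul_eq_mul]
  have hval1 : ∑ a ∈ (univ.filter fun a : Fin n → ZMod 2 => ¬ ((∑ j, v j * a j) = 0)),
      h (∑ j, v j * a j) = (2 ^ (n - 1) : ℕ) * h 1 := by
    rw [Finset.sum_congr rfl (fun a ha => by
        rw [h01 _ (Finset.mem_filter.mp ha).2]),
      Finset.sum_const, ← hcards, hcard0, nsmul_eq_mul]
  have hsplit := Finset.sum_filter_add_sum_filter_not univ
      (fun a : Fin n → ZMod 2 => (∑ j, v j * a j) = 0)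
      (fun a => h (∑ j, v j * a j))
  rw [hval0, hval1] at hsplit
  rw [← hsplit]
  push_cast
  ring

lemma mgf (hn : 1 ≤ n) (N : ℕ) {v : Fin n → ZMod 2} (hv : v ≠ 0) (t : ℝ) :
    ∑ G : Fin N → Fin n → ZMod 2, Real.exp (t * ∑ k, χ v (G k))
      = (2 ^ (n - 1) * (Real.exp t + Real.exp (-t))) ^ N := by
  have h1 : ∀ G : Fin N → Fin n → ZMod 2,
      Real.exp (t * ∑ k, χ v (G k)) = ∏ k, Real.exp (t * χ v (G k)) := by
    intro G; rw [Finset.mul_sum, Real.exp_sum]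
  simp_rw [h1]
  rw [← Fintype.piFinset_univ,
    Finset.sum_prod_piFinset univ (fun (k : Fin N) (a : Fin n → ZMod 2) => Real.exp (t * χ v a))]
  have hin : ∑ a : Fin n → ZMod 2, Real.exp (t * χ v a)
      = 2 ^ (n - 1) * (Real.exp t + Real.exp (-t)) := by
    have hb := balanced hn hv (fun b => Real.exp (t * sgn b))
    simp only [χ]
    rw [hb]
    have : sgn 0 = 1 := sgn_zero
    have h1' : sgn 1 = -1 := rfl
    rw [this, h1']
    ring_nf
  simp_rw [hin]
  rw [Finset.prod_const, Finset.card_univ, Fintype.card_fin]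

lemma count_bad (hn : 1 ≤ n) (N : ℕ) {v : Fin n → ZMod 2} (hv : v ≠ 0) (ρ : ℝ) (hρ : 0 < ρ) :
    ((univ.filter fun G : Fin N → Fin n → ZMod 2 =>
        ρ * N < |∑ k, χ v (G k)|).card : ℝ)
      ≤ (2 ^ (n * N) : ℝ) * (2 * Real.exp (-(ρ ^ 2 * N) / 2)) := by
  classical
  set S : (Fin N → Fin n → ZMod 2) → ℝ := fun G => ∑ k, χ v (G k) with hS
  set T : ℝ := ρ * N with hT
  have hpt : ∀ G ∈ (univ.filter fun G : Fin N → Fin n → ZMod 2 => T < |S G|),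
      (1:ℝ) ≤ Real.exp (ρ * S G - ρ * T) + Real.exp (-(ρ * S G) - ρ * T) := by
    intro G hG
    have hG' : T < |S G| := (Finset.mem_filter.mp hG).2
    have hT0 : 0 ≤ T := mul_nonneg hρ.le (Nat.cast_nonneg N)
    rcases abs_cases (S G) with ⟨ha, _⟩ | ⟨ha, _⟩
    · have hst : 0 ≤ ρ * S G - ρ * T := by nlinarith
      have h1 := Real.one_le_exp hst
      linarith [Real.exp_pos (-(ρ * S G) - ρ * T)]
    · have hst : 0 ≤ -(ρ * S G) - ρ * T := by nlinarith
      have h1 := Real.one_le_exp hst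
      linarith [Real.exp_pos (ρ * S G - ρ * T)]
  have hcount : ((univ.filter fun G : Fin N → Fin n → ZMod 2 => T < |S G|).card : ℝ)
      ≤ ∑ G : Fin N → Fin n → ZMod 2,
          (Real.exp (ρ * S G - ρ * T) + Real.exp (-(ρ * S G) - ρ * T)) := by
    rw [Finset.card_eq_sum_ones, Nat.cast_sum]
    push_cast
    calc ∑ _G ∈ (univ.filter fun G : Fin N → Fin n → ZMod 2 => T < |S G|), (1:ℝ)
        ≤ ∑ G ∈ (univ.filter fun G : Fin N → Fin n → ZMod 2 => T < |S G|),
            (Real.exp (ρ * S G - ρ * T) + Real.exp (-(ρ * S G) - ρ * T)) :=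
          Finset.sum_le_sum hpt
      _ ≤ ∑ G : Fin N → Fin n → ZMod 2,
            (Real.exp (ρ * S G - ρ * T) + Real.exp (-(ρ * S G) - ρ * T)) :=
          Finset.sum_le_sum_of_subset_of_nonneg (Finset.filter_subset _ _)
            (fun G _ _ => by positivity)
  have hsum : ∑ G : Fin N → Fin n → ZMod 2,
      (Real.exp (ρ * S G - ρ * T) + Real.exp (-(ρ * S G) - ρ * T))
      = ((2:ℝ) ^ (n - 1) * (Real.exp ρ + Real.exp (-ρ))) ^ N * Real.exp (-(ρ * T))
        + ((2:ℝ) ^ (n - 1) * (Real.exp (-ρ) + Real.exp ρ)) ^ N * Real.exp (-(ρ * T)) := by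
    rw [Finset.sum_add_distrib]
    congr 1
    · simp_rw [sub_eq_add_neg, Real.exp_add, ← Finset.sum_mul]
      congr 1
      have := mgf hn N hv ρ
      simpa [hS] using this
    · simp_rw [sub_eq_add_neg, Real.exp_add, ← Finset.sum_mul]
      congr 1
      have := mgf hn N hv (-ρ)
      simp only [neg_neg] at this
      simp_rw [neg_mul] at this
      simpa [hS] using this
  have hcosh : Real.exp ρ + Real.exp (-ρ) ≤ 2 * Real.exp (ρ ^ 2 / 2) := by
    have h1 : Real.cosh ρ ≤ Real.exp (ρ ^ 2 / 2) := Real.cosh_le_exp_half_sq ρ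
    rw [Real.cosh_eq] at h1
    linarith
  have hMnn : (0:ℝ) ≤ (2:ℝ) ^ (n - 1) * (Real.exp ρ + Real.exp (-ρ)) := by positivity
  have hMle : ((2:ℝ) ^ (n - 1) * (Real.exp ρ + Real.exp (-ρ))) ^ N
      ≤ ((2:ℝ) ^ (n * N)) * Real.exp (ρ ^ 2 / 2 * N) := by
    calc ((2:ℝ) ^ (n - 1) * (Real.exp ρ + Real.exp (-ρ))) ^ N
        ≤ ((2:ℝ) ^ (n - 1) * (2 * Real.exp (ρ ^ 2 / 2))) ^ N := by
          apply pow_le_pow_left₀ hMnn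
          exact mul_le_mul_of_nonneg_left hcosh (by positivity)
      _ = ((2:ℝ) ^ (n - 1)) ^ N * 2 ^ N * (Real.exp (ρ ^ 2 / 2)) ^ N := by ring
      _ = ((2:ℝ) ^ (n * N)) * Real.exp (ρ ^ 2 / 2 * N) := by
          rw [← pow_mul, ← Real.exp_nat_mul]
          rw [show (2:ℝ) ^ ((n-1) * N) * 2 ^ N = 2 ^ ((n-1) * N + N) from (pow_add 2 _ _).symm]
          rw [show (n - 1) * N + N = n * N from by
            have h' : (n - 1) + 1 = n := Nat.sub_add_cancel hn
            calc (n - 1) * N + N = ((n - 1) + 1) * N := by ring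
              _ = n * N := by rw [h']]
          rw [mul_comm (ρ ^ 2 / 2) (N:ℝ)]
  have hexp : Real.exp (ρ ^ 2 / 2 * N) * Real.exp (-(ρ * T)) = Real.exp (-(ρ ^ 2 * N) / 2) := by
    rw [← Real.exp_add, hT]
    congr 1
    ring
  have hBA : ((2:ℝ) ^ (n - 1) * (Real.exp (-ρ) + Real.exp ρ)) ^ N
      = ((2:ℝ) ^ (n - 1) * (Real.exp ρ + Real.exp (-ρ))) ^ N := by rw [add_comm (Real.exp (-ρ))]
  have hfin : ((2:ℝ) ^ (n - 1) * (Real.exp ρ + Real.exp (-ρ))) ^ N * Real.exp (-(ρ * T))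
      ≤ ((2:ℝ) ^ (n * N)) * Real.exp (-(ρ ^ 2 * N) / 2) := by
    calc ((2:ℝ) ^ (n - 1) * (Real.exp ρ + Real.exp (-ρ))) ^ N * Real.exp (-(ρ * T))
        ≤ ((2:ℝ) ^ (n * N)) * Real.exp (ρ ^ 2 / 2 * N) * Real.exp (-(ρ * T)) :=
          mul_le_mul_of_nonneg_right hMle (Real.exp_pos _).le
      _ = ((2:ℝ) ^ (n * N)) * Real.exp (-(ρ ^ 2 * N) / 2) := by rw [mul_assoc, hexp]
  refine le_trans (le_of_le_of_eq hcount hsum) ?_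
  rw [hBA]
  linarith

end SC

set_option maxHeartbeats 1000000 in
theorem stmt11 (n s : ℕ) (hn : 1 ≤ n) (hs : 1 ≤ s) (ρ ε : ℝ) (hρ : 0 < ρ) (hε : 0 < ε)
    (hkey : 2 * Real.logb 2 (1 / ρ) + Real.logb 2 (n : ℝ) +
        Real.logb 2 (1 + (1 / (n : ℝ)) * Real.logb 2 (1 / ε)) + 2 ≤ (s : ℝ)) :
    1 - ε < ((univ.filter fun G : Fin (2 ^ s) → Fin n → ZMod 2 =>
        maxCorr (fun (m c : Fin n → ZMod 2) =>
          ((2 ^ n : ℝ))⁻¹ * ((2 ^ s : ℝ))⁻¹ *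
            ((univ.filter fun k => m + G k = c).card : ℝ)) ≤ ρ).card : ℝ) /
      (Fintype.card (Fin (2 ^ s) → Fin n → ZMod 2) : ℝ) := by
  classical
  have hcardΩ : (Fintype.card (Fin (2 ^ s) → Fin n → ZMod 2)) = 2 ^ (n * 2 ^ s) := by
    rw [Fintype.card_fun, Fintype.card_fun, ZMod.card, Fintype.card_fin, Fintype.card_fin,
      ← pow_mul]
  have hT0 : (0:ℝ) < (Fintype.card (Fin (2 ^ s) → Fin n → ZMod 2) : ℝ) := by
    rw [hcardΩ]; positivity
  rcases le_or_gt ε 1 with hε1 | hε1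
  swap
  · -- trivial case ε > 1
    have hfrac : (0:ℝ) ≤ ((univ.filter fun G : Fin (2 ^ s) → Fin n → ZMod 2 =>
        maxCorr (fun (m c : Fin n → ZMod 2) =>
          ((2 ^ n : ℝ))⁻¹ * ((2 ^ s : ℝ))⁻¹ *
            ((univ.filter fun k => m + G k = c).card : ℝ)) ≤ ρ).card : ℝ) /
        (Fintype.card (Fin (2 ^ s) → Fin n → ZMod 2) : ℝ) :=
      div_nonneg (Nat.cast_nonneg _) (Nat.cast_nonneg _)
    linarith
  -- main case ε ≤ 1
  have hcast2s : ((2 ^ s : ℕ) : ℝ) = (2:ℝ) ^ s := by push_cast; ring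
  set good := (univ.filter fun G : Fin (2 ^ s) → Fin n → ZMod 2 =>
      maxCorr (fun (m c : Fin n → ZMod 2) =>
        ((2 ^ n : ℝ))⁻¹ * ((2 ^ s : ℝ))⁻¹ *
          ((univ.filter fun k => m + G k = c).card : ℝ)) ≤ ρ) with hgood
  set bad := (univ.filter fun G : Fin (2 ^ s) → Fin n → ZMod 2 =>
      ∃ v : Fin n → ZMod 2, v ≠ 0 ∧ ρ * (2:ℝ) ^ s < |∑ k, SC.χ v (G k)|) with hbad
  -- complement of bad is good
  have hsub : ∀ G : Fin (2 ^ s) → Fin n → ZMod 2, G ∉ bad → G ∈ good := by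
    intro G hG
    rw [hbad] at hG
    simp only [Finset.mem_filter, Finset.mem_univ, true_and, not_exists, not_and, not_lt] at hG
    rw [hgood]
    exact Finset.mem_filter.mpr ⟨Finset.mem_univ _,
      SC.maxCorr_le_of_eps s G ρ hρ.le fun v hv => hG v hv⟩
  have hcards : (Fintype.card (Fin (2 ^ s) → Fin n → ZMod 2) : ℝ)
      ≤ (bad.card : ℝ) + (good.card : ℝ) := by
    have h1 : (univ : Finset (Fin (2 ^ s) → Fin n → ZMod 2)) ⊆ bad ∪ good := by
      intro G _
      rcases em (G ∈ bad) with h | h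
      · exact Finset.mem_union_left _ h
      · exact Finset.mem_union_right _ (hsub G h)
    have h2 := Finset.card_le_card h1
    have h3 := Finset.card_union_le bad good
    rw [Finset.card_univ] at h2
    exact_mod_cast le_trans h2 h3
  -- per-v count, cleaned casts
  have hcount' : ∀ v : Fin n → ZMod 2, v ≠ 0 →
      ((univ.filter fun G : Fin (2 ^ s) → Fin n → ZMod 2 =>
          ρ * (2:ℝ) ^ s < |∑ k, SC.χ v (G k)|).card : ℝ)
        ≤ (2:ℝ) ^ (n * 2 ^ s) * (2 * Real.exp (-(ρ ^ 2 * (2:ℝ) ^ s) / 2)) := by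
    intro v hv
    have h := SC.count_bad hn (2 ^ s) hv ρ hρ
    rwa [hcast2s] at h
  -- union bound
  have hbadle : (bad.card : ℝ)
      ≤ (2:ℝ) ^ n * ((2:ℝ) ^ (n * 2 ^ s) * (2 * Real.exp (-(ρ ^ 2 * (2:ℝ) ^ s) / 2))) := by
    have hsubU : bad ⊆ (univ.erase (0 : Fin n → ZMod 2)).biUnion
        (fun v => univ.filter fun G : Fin (2 ^ s) → Fin n → ZMod 2 =>
          ρ * (2:ℝ) ^ s < |∑ k, SC.χ v (G k)|) := by
      intro G hG
      rw [hbad] at hG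
      obtain ⟨v, hv, hvlt⟩ := (Finset.mem_filter.mp hG).2
      exact Finset.mem_biUnion.mpr ⟨v, Finset.mem_erase.mpr ⟨hv, Finset.mem_univ _⟩,
        Finset.mem_filter.mpr ⟨Finset.mem_univ _, hvlt⟩⟩
    have h1 := le_trans (Finset.card_le_card hsubU) (Finset.card_biUnion_le)
    have h1' : (bad.card : ℝ) ≤ ∑ v ∈ univ.erase (0 : Fin n → ZMod 2),
        ((univ.filter fun G : Fin (2 ^ s) → Fin n → ZMod 2 =>
          ρ * (2:ℝ) ^ s < |∑ k, SC.χ v (G k)|).card : ℝ) := by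
      rw [← Nat.cast_sum]
      exact_mod_cast h1
    calc (bad.card : ℝ) ≤ _ := h1'
      _ ≤ ∑ _v ∈ univ.erase (0 : Fin n → ZMod 2),
            ((2:ℝ) ^ (n * 2 ^ s) * (2 * Real.exp (-(ρ ^ 2 * (2:ℝ) ^ s) / 2))) :=
          Finset.sum_le_sum fun v hv => hcount' v (Finset.mem_erase.mp hv).1
      _ = ((univ.erase (0 : Fin n → ZMod 2)).card : ℝ) *
            ((2:ℝ) ^ (n * 2 ^ s) * (2 * Real.exp (-(ρ ^ 2 * (2:ℝ) ^ s) / 2))) := by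
          rw [Finset.sum_const, nsmul_eq_mul]
      _ ≤ (2:ℝ) ^ n * ((2:ℝ) ^ (n * 2 ^ s) * (2 * Real.exp (-(ρ ^ 2 * (2:ℝ) ^ s) / 2))) := by
          refine mul_le_mul_of_nonneg_right ?_ (by positivity)
          calc ((univ.erase (0 : Fin n → ZMod 2)).card : ℝ)
              ≤ ((univ : Finset (Fin n → ZMod 2)).card : ℝ) := by
                exact_mod_cast Finset.card_le_card (Finset.erase_subset _ _)
            _ = (2:ℝ) ^ n := by
                rw [Finset.card_univ, show Fintype.card (Fin n → ZMod 2) = 2 ^ n by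
                  simp [Fintype.card_fun]]
                push_cast; ring
  -- key arithmetic
  have hL : 0 ≤ Real.logb 2 (1 / ε) :=
    Real.logb_nonneg (by norm_num) (by rw [le_div_iff₀ hε]; linarith)
  set L := Real.logb 2 (1 / ε) with hLdef
  have hn1 : (1:ℝ) ≤ (n:ℝ) := by exact_mod_cast hn
  have hX : 2 * ((n:ℝ) + L) ≤ ρ ^ 2 * (2:ℝ) ^ s / 2 := by
    have hB : (0:ℝ) < 1 + (1 / (n : ℝ)) * L := by
      have : (0:ℝ) ≤ (1 / (n:ℝ)) * L := by positivity
      linarith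
    have hmono := Real.rpow_le_rpow_of_exponent_le (by norm_num : (1:ℝ) ≤ 2) hkey
    rw [Real.rpow_natCast] at hmono
    have hexpand : (2:ℝ) ^ (2 * Real.logb 2 (1 / ρ) + Real.logb 2 (n : ℝ) +
        Real.logb 2 (1 + (1 / (n : ℝ)) * L) + 2)
        = (1/ρ) * (1/ρ) * (n:ℝ) * (1 + (1 / (n : ℝ)) * L) * 4 := by
      rw [Real.rpow_add (by norm_num : (0:ℝ) < 2), Real.rpow_add (by norm_num : (0:ℝ) < 2),
        Real.rpow_add (by norm_num : (0:ℝ) < 2), two_mul,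
        Real.rpow_add (by norm_num : (0:ℝ) < 2)]
      rw [Real.rpow_logb (by norm_num) (by norm_num) (by positivity : (0:ℝ) < 1/ρ)]
      rw [Real.rpow_logb (by norm_num) (by norm_num) (by linarith : (0:ℝ) < (n:ℝ))]
      rw [Real.rpow_logb (by norm_num) (by norm_num) hB]
      rw [show ((2:ℝ) : ℝ) ^ ((2:ℝ)) = 4 by
        rw [show ((2:ℝ)) = ((2:ℕ):ℝ) by norm_num, Real.rpow_natCast]; norm_num]
    rw [hexpand] at hmono
    have hnL : (n:ℝ) * (1 + (1 / (n : ℝ)) * L) = (n:ℝ) + L := by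
      field_simp
    have h4 : 4 * ((n:ℝ) + L) / ρ ^ 2 ≤ (2:ℝ) ^ s := by
      rw [div_le_iff₀ (by positivity : (0:ℝ) < ρ ^ 2)]
      calc 4 * ((n:ℝ) + L) = (1/ρ) * (1/ρ) * ((n:ℝ) + L) * 4 * ρ ^ 2 := by
            field_simp
        _ = (1/ρ) * (1/ρ) * ((n:ℝ) * (1 + (1 / (n : ℝ)) * L)) * 4 * ρ ^ 2 := by rw [hnL]
        _ ≤ (2:ℝ) ^ s * ρ ^ 2 := by
            refine mul_le_mul_of_nonneg_right ?_ (by positivity)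
            calc (1/ρ) * (1/ρ) * ((n:ℝ) * (1 + (1 / (n : ℝ)) * L)) * 4
                = (1/ρ) * (1/ρ) * (n:ℝ) * (1 + (1 / (n : ℝ)) * L) * 4 := by ring
              _ ≤ (2:ℝ) ^ s := hmono
    have h5 := (div_le_iff₀ (by positivity : (0:ℝ) < ρ ^ 2)).mp h4
    linarith
  have hXpos : (0:ℝ) < 2 * ((n:ℝ) + L) := by nlinarith
  -- 2^n * (2 * exp(-X)) < ε
  have hmain : (2:ℝ) ^ n * (2 * Real.exp (-(ρ ^ 2 * (2:ℝ) ^ s) / 2)) < ε := by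
    have h1 : Real.exp (-(ρ ^ 2 * (2:ℝ) ^ s) / 2) ≤ Real.exp (-(2 * ((n:ℝ) + L))) := by
      apply Real.exp_le_exp.mpr
      linarith
    have h2 : Real.exp (-(2 * ((n:ℝ) + L))) < (2:ℝ) ^ (-(2 * ((n:ℝ) + L))) := by
      rw [Real.rpow_def_of_pos (by norm_num : (0:ℝ) < 2)]
      apply Real.exp_lt_exp.mpr
      have hlog : Real.log 2 < 1 := by
        calc Real.log 2 < Real.log (Real.exp 1) := by
              apply Real.log_lt_log (by norm_num)
              linarith [Real.exp_one_gt_d9]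
          _ = 1 := Real.log_exp 1
      nlinarith [hXpos, Real.log_pos (by norm_num : (1:ℝ) < 2)]
    have h3 : (2:ℝ) ^ n * (2:ℝ) ^ (-(2 * ((n:ℝ) + L))) ≤ (2:ℝ) ^ (-(2 * L) - 1) := by
      have hc : (2:ℝ) ^ n = (2:ℝ) ^ ((n:ℝ)) := by rw [Real.rpow_natCast]
      rw [hc, ← Real.rpow_add (by norm_num : (0:ℝ) < 2)]
      apply Real.rpow_le_rpow_of_exponent_le (by norm_num : (1:ℝ) ≤ 2)
      linarith
    have h4 : (2:ℝ) ^ (-(2 * L) - 1) ≤ ε ^ 2 / 2 := by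
      rw [Real.rpow_sub (by norm_num : (0:ℝ) < 2)]
      have h5 : (2:ℝ) ^ (-(2 * L)) = ε ^ 2 := by
        rw [show -(2 * L) = L * (-2) by ring,
          Real.rpow_mul (by norm_num : (0:ℝ) ≤ 2), hLdef,
          Real.rpow_logb (by norm_num) (by norm_num) (by positivity : (0:ℝ) < 1/ε)]
        rw [Real.rpow_neg (by positivity : (0:ℝ) ≤ 1/ε),
          show ((2:ℝ)) = ((2:ℕ):ℝ) by norm_num, Real.rpow_natCast]
        field_simp
      have h6 : (2:ℝ) ^ ((1:ℝ)) = 2 := by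
        rw [show ((1:ℝ)) = ((1:ℕ):ℝ) by norm_num, Real.rpow_natCast]; norm_num
      rw [h5, h6]
    have hexpos := Real.exp_pos (-(ρ ^ 2 * (2:ℝ) ^ s) / 2)
    have h2npos : (0:ℝ) < (2:ℝ) ^ n := by positivity
    calc (2:ℝ) ^ n * (2 * Real.exp (-(ρ ^ 2 * (2:ℝ) ^ s) / 2))
        ≤ (2:ℝ) ^ n * (2 * Real.exp (-(2 * ((n:ℝ) + L)))) := by
          refine mul_le_mul_of_nonneg_left (by linarith) (by positivity)
      _ < (2:ℝ) ^ n * (2 * (2:ℝ) ^ (-(2 * ((n:ℝ) + L)))) := by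
          refine mul_lt_mul_of_pos_left (by linarith) h2npos
      _ = 2 * ((2:ℝ) ^ n * (2:ℝ) ^ (-(2 * ((n:ℝ) + L)))) := by ring
      _ ≤ 2 * ((2:ℝ) ^ (-(2 * L) - 1)) := by linarith
      _ ≤ 2 * (ε ^ 2 / 2) := by linarith
      _ = ε ^ 2 := by ring
      _ ≤ ε := by nlinarith [hε.le, hε1]
  -- assemble
  rw [lt_div_iff₀ hT0]
  have hbadlt : (bad.card : ℝ) < ε * (Fintype.card (Fin (2 ^ s) → Fin n → ZMod 2) : ℝ) := by
    calc (bad.card : ℝ)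
        ≤ (2:ℝ) ^ n * ((2:ℝ) ^ (n * 2 ^ s) * (2 * Real.exp (-(ρ ^ 2 * (2:ℝ) ^ s) / 2))) :=
          hbadle
      _ = (2:ℝ) ^ (n * 2 ^ s) * ((2:ℝ) ^ n * (2 * Real.exp (-(ρ ^ 2 * (2:ℝ) ^ s) / 2))) := by
          ring
      _ < (2:ℝ) ^ (n * 2 ^ s) * ε := mul_lt_mul_of_pos_left hmain (by positivity)
      _ = ε * (Fintype.card (Fin (2 ^ s) → Fin n → ZMod 2) : ℝ) := by
          rw [hcardΩ]; push_cast; ring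
  nlinarith [hcards, hbadlt, hT0]
end

section
/- For every ρ ∈ (0,1) and every positive integer n, there exists a binary additive stream cipher (i.e., a keystream generator g: [1:2ˢ] → {0,1}ⁿ) with key length s = ⌈2log₂(1/ρ) + log₂ n + 2⌉ such that ρ_m(M; M ⊕ g(K)) ≤ ρ, where M is uniform on {0,1}ⁿ and K uniform on [1:2ˢ] is independent of M. -/
open BigOperators Finset
open scoped Classical


namespace Stmt12Aux

lemma zmod2_cases : ∀ a : ZMod 2, a = 0 ∨ a = 1 := by decide

lemma zmod2_add_self : ∀ a : ZMod 2, a + a = 0 := by decide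

variable {n : ℕ}

lemma vadd_self (z : Fin n → ZMod 2) : z + z = 0 := by
  funext i; exact zmod2_add_self (z i)

lemma veq_of_add_eq_zero {x y : Fin n → ZMod 2} (h : x + y = 0) : x = y := by
  have : x + (y + y) = 0 + y := by rw [← add_assoc, h]
  rwa [vadd_self, add_zero, zero_add] at this

noncomputable def chi (v x : Fin n → ZMod 2) : ℝ :=
  if (∑ i, v i * x i) = 0 then 1 else -1

lemma chi_cases (v x : Fin n → ZMod 2) : chi v x = 1 ∨ chi v x = -1 := by
  unfold chi; split <;> simp

lemma chi_zero_left (x : Fin n → ZMod 2) : chi 0 x = 1 := by simp [chi]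

lemma chi_zero_right (v : Fin n → ZMod 2) : chi v 0 = 1 := by simp [chi]

lemma chi_comm (v x : Fin n → ZMod 2) : chi v x = chi x v := by
  unfold chi
  rw [Finset.sum_congr rfl fun i _ => mul_comm (v i) (x i)]

lemma chi_add (v x y : Fin n → ZMod 2) : chi v (x + y) = chi v x * chi v y := by
  unfold chi
  have hxy : (∑ i, v i * (x + y) i) = (∑ i, v i * x i) + (∑ i, v i * y i) := by
    rw [← Finset.sum_add_distrib]
    exact Finset.sum_congr rfl fun i _ => by simp [mul_add]
  rw [hxy]
  rcases zmod2_cases (∑ i, v i * x i) with h1 | h1 <;>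
    rcases zmod2_cases (∑ i, v i * y i) with h2 | h2 <;>
      simp [h1, h2, (by decide : (1 + 1 : ZMod 2) = 0),
        (by decide : (1 : ZMod 2) ≠ 0)]

lemma sum_chi {v : Fin n → ZMod 2} (hv : v ≠ 0) : ∑ x, chi v x = 0 := by
  obtain ⟨i, hi⟩ := Function.ne_iff.mp hv
  have hi' : v i ≠ 0 := by simpa using hi
  have hvi : v i = 1 := by
    rcases zmod2_cases (v i) with h | h
    · exact absurd h hi'
    · exact h
  set e : Fin n → ZMod 2 := Pi.single i 1 with he
  have hce : chi v e = -1 := by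
    have hsum : (∑ j, v j * e j) = 1 := by
      rw [he, Finset.sum_eq_single i]
      · simp [hvi]
      · intro b _ hb; simp [Pi.single_apply, hb]
      · intro h; exact absurd (Finset.mem_univ i) h
    simp [chi, hsum, (by decide : (1 : ZMod 2) ≠ 0)]
  have hinv : ∑ x, chi v (x + e) = ∑ x, chi v x :=
    Fintype.sum_equiv (Equiv.addRight e) _ _ (fun x => rfl)
  have h2 : ∑ x, chi v (x + e) = -∑ x, chi v x := by
    rw [← Finset.sum_neg_distrib]
    exact Finset.sum_congr rfl fun x _ => by rw [chi_add, hce, mul_neg_one]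
  linarith [hinv, h2]

lemma card_V : Fintype.card (Fin n → ZMod 2) = 2 ^ n := by
  simp

lemma sum_chi_right {x : Fin n → ZMod 2} (hx : x ≠ 0) : ∑ v, chi v x = 0 := by
  rw [Finset.sum_congr rfl fun v _ => chi_comm v x]
  exact sum_chi hx

lemma sum_chi_mul (x y : Fin n → ZMod 2) :
    ∑ v, chi v x * chi v y = if x = y then (2 ^ n : ℝ) else 0 := by
  rw [Finset.sum_congr rfl fun v _ => (chi_add v x y).symm]
  by_cases h : x = y
  · subst h
    rw [if_pos rfl, vadd_self]
    rw [Finset.sum_congr rfl fun v _ => chi_zero_right v]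
    simp [card_V]
  · rw [if_neg h]
    refine sum_chi_right fun hc => h (veq_of_add_eq_zero hc)


noncomputable def hat (f : (Fin n → ZMod 2) → ℝ) (v : Fin n → ZMod 2) : ℝ :=
  (2 ^ n : ℝ)⁻¹ * ∑ x, f x * chi v x

lemma hat_zero (f : (Fin n → ZMod 2) → ℝ) : hat f 0 = (2 ^ n : ℝ)⁻¹ * ∑ x, f x := by
  unfold hat
  rw [Finset.sum_congr rfl fun x _ => by rw [chi_zero_left, mul_one]]

lemma parseval (f : (Fin n → ZMod 2) → ℝ) :
    ∑ v, hat f v ^ 2 = (2 ^ n : ℝ)⁻¹ * ∑ x, f x ^ 2 := by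
  have h2n : (2 ^ n : ℝ) ≠ 0 := by positivity
  have h : ∀ v : Fin n → ZMod 2, hat f v ^ 2
      = (2 ^ n : ℝ)⁻¹ * (2 ^ n : ℝ)⁻¹ * ∑ x, ∑ y, f x * f y * (chi v x * chi v y) := by
    intro v
    calc hat f v ^ 2
        = (2 ^ n : ℝ)⁻¹ * (2 ^ n : ℝ)⁻¹ *
            ((∑ x, f x * chi v x) * (∑ y, f y * chi v y)) := by rw [hat]; ring
      _ = (2 ^ n : ℝ)⁻¹ * (2 ^ n : ℝ)⁻¹ * ∑ x, ∑ y, f x * f y * (chi v x * chi v y) := by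
          rw [Finset.sum_mul_sum]
          congr 1
          exact Finset.sum_congr rfl fun x _ => Finset.sum_congr rfl fun y _ => by ring
  rw [Finset.sum_congr rfl fun v _ => h v, ← Finset.mul_sum]
  rw [Finset.sum_comm]
  rw [Finset.sum_congr rfl fun x _ => Finset.sum_comm]
  have hinner : ∀ x y : Fin n → ZMod 2,
      ∑ v, f x * f y * (chi v x * chi v y) = f x * f y * (if x = y then (2 ^ n : ℝ) else 0) := by
    intro x y; rw [← Finset.mul_sum, sum_chi_mul]
  rw [Finset.sum_congr rfl fun x _ => Finset.sum_congr rfl fun y _ => hinner x y]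
  have hx2 : ∀ x : Fin n → ZMod 2,
      (∑ y, f x * f y * (if x = y then (2 ^ n : ℝ) else 0)) = f x ^ 2 * 2 ^ n := by
    intro x
    rw [Finset.sum_eq_single x]
    · rw [if_pos rfl]; ring
    · intro y _ hy
      rw [if_neg (fun hc => hy hc.symm), mul_zero]
    · intro h; exact absurd (Finset.mem_univ x) h
  rw [Finset.sum_congr rfl fun x _ => hx2 x, ← Finset.sum_mul]
  field_simp

lemma key (f f' : (Fin n → ZMod 2) → ℝ) (a : Fin n → ZMod 2) :
    ∑ m, f m * f' (m + a) = (2 ^ n : ℝ) * ∑ v, hat f v * hat f' v * chi v a := by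
  have h2n : (2 ^ n : ℝ) ≠ 0 := by positivity
  have h : ∀ v : Fin n → ZMod 2, hat f v * hat f' v * chi v a
      = (2 ^ n : ℝ)⁻¹ * (2 ^ n : ℝ)⁻¹ *
          ∑ x, ∑ y, f x * f' y * (chi v x * chi v (y + a)) := by
    intro v
    calc hat f v * hat f' v * chi v a
        = (2 ^ n : ℝ)⁻¹ * (2 ^ n : ℝ)⁻¹ *
            (((∑ x, f x * chi v x) * (∑ y, f' y * chi v y)) * chi v a) := by rw [hat, hat]; ring
      _ = (2 ^ n : ℝ)⁻¹ * (2 ^ n : ℝ)⁻¹ *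
            ((∑ x, ∑ y, f x * chi v x * (f' y * chi v y)) * chi v a) := by
          rw [Finset.sum_mul_sum]
      _ = (2 ^ n : ℝ)⁻¹ * (2 ^ n : ℝ)⁻¹ *
            ∑ x, ∑ y, f x * f' y * (chi v x * chi v (y + a)) := by
          rw [Finset.sum_mul, Finset.sum_congr rfl fun x _ => Finset.sum_mul _ _ _]
          congr 1
          refine Finset.sum_congr rfl fun x _ => Finset.sum_congr rfl fun y _ => ?_
          rw [chi_add v y a]
          ring
  rw [Finset.sum_congr rfl fun v _ => h v, ← Finset.mul_sum]
  rw [Finset.sum_comm]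
  rw [Finset.sum_congr rfl fun x _ => Finset.sum_comm]
  have hinner : ∀ x y : Fin n → ZMod 2,
      ∑ v, f x * f' y * (chi v x * chi v (y + a))
        = f x * f' y * (if x = y + a then (2 ^ n : ℝ) else 0) := by
    intro x y; rw [← Finset.mul_sum, sum_chi_mul]
  rw [Finset.sum_congr rfl fun x _ => Finset.sum_congr rfl fun y _ => hinner x y]
  have hout : ∀ x : Fin n → ZMod 2,
      ∑ y, f x * f' y * (if x = y + a then (2 ^ n : ℝ) else 0)
        = f x * f' (x + a) * (2 ^ n : ℝ) := by
    intro x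
    rw [Finset.sum_eq_single (x + a)]
    · rw [if_pos (by rw [add_assoc, vadd_self, add_zero])]
    · intro y _ hy
      rw [if_neg, mul_zero]
      intro hc
      exact hy (by rw [hc, add_assoc, vadd_self, add_zero])
    · intro h; exact absurd (Finset.mem_univ _) h
  rw [Finset.sum_congr rfl fun x _ => hout x]
  rw [← Finset.sum_mul]
  field_simp
variable {n s : ℕ}

lemma mgf (v : Fin n → ZMod 2) (hv : v ≠ 0) (lam : ℝ) :
    ∑ gg : Fin (2 ^ s) → Fin n → ZMod 2, Real.exp (lam * ∑ k, chi v (gg k))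
      = ((2 ^ n : ℝ) * Real.cosh lam) ^ (2 ^ s) := by
  have h1 : ∀ gg : Fin (2 ^ s) → Fin n → ZMod 2,
      Real.exp (lam * ∑ k, chi v (gg k)) = ∏ k, Real.exp (lam * chi v (gg k)) := by
    intro gg; rw [Finset.mul_sum, Real.exp_sum]
  rw [Finset.sum_congr rfl fun gg _ => h1 gg]
  rw [← Fintype.sum_pow (fun x : Fin n → ZMod 2 => Real.exp (lam * chi v x)) (2 ^ s)]
  congr 1
  have hx : ∀ x : Fin n → ZMod 2,
      Real.exp (lam * chi v x) = Real.cosh lam + Real.sinh lam * chi v x := by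
    intro x
    rcases chi_cases v x with h | h <;> rw [h]
    · rw [mul_one, mul_one, Real.cosh_add_sinh]
    · rw [mul_neg_one, mul_neg_one, ← sub_eq_add_neg, Real.cosh_sub_sinh]
  rw [Finset.sum_congr rfl fun x _ => hx x, Finset.sum_add_distrib, ← Finset.mul_sum,
    sum_chi hv, mul_zero, add_zero, Finset.sum_const, Finset.card_univ, card_V,
    nsmul_eq_mul]
  push_cast
  ring

lemma tail_gen (v : Fin n → ZMod 2) (hv : v ≠ 0) (lam u : ℝ) :
    ((univ.filter fun gg : Fin (2 ^ s) → Fin n → ZMod 2 =>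
        u ≤ lam * ∑ k, chi v (gg k)).card : ℝ) * Real.exp u
      ≤ ((2 ^ n : ℝ) * Real.cosh lam) ^ (2 ^ s) := by
  rw [← mgf v hv lam]
  calc ((univ.filter fun gg : Fin (2 ^ s) → Fin n → ZMod 2 =>
        u ≤ lam * ∑ k, chi v (gg k)).card : ℝ) * Real.exp u
      ≤ ∑ gg ∈ univ.filter fun gg : Fin (2 ^ s) → Fin n → ZMod 2 =>
          u ≤ lam * ∑ k, chi v (gg k), Real.exp (lam * ∑ k, chi v (gg k)) := by
        rw [← nsmul_eq_mul]
        refine Finset.card_nsmul_le_sum _ _ _ ?_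
        intro gg hgg
        rw [Finset.mem_filter] at hgg
        exact Real.exp_le_exp.mpr hgg.2
    _ ≤ ∑ gg : Fin (2 ^ s) → Fin n → ZMod 2, Real.exp (lam * ∑ k, chi v (gg k)) :=
        Finset.sum_le_sum_of_subset_of_nonneg (Finset.filter_subset _ _)
          (fun _ _ _ => (Real.exp_pos _).le)

lemma exists_good (hn : 1 ≤ n) {ρ : ℝ} (hρ0 : 0 < ρ)
    (hK : 4 * (n : ℝ) / ρ ^ 2 ≤ (2 ^ s : ℝ)) :
    ∃ g : Fin (2 ^ s) → Fin n → ZMod 2,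
      ∀ v : Fin n → ZMod 2, v ≠ 0 → |∑ k, chi v (g k)| ≤ ρ * 2 ^ s := by
  by_contra hcon
  push_neg at hcon
  set KR : ℝ := (2 ^ s : ℝ) with hKRdef
  have hKR : (0:ℝ) < KR := by positivity
  set Bad : (Fin n → ZMod 2) → Finset (Fin (2 ^ s) → Fin n → ZMod 2) :=
    fun v => univ.filter fun gg => ρ * KR < |∑ k, chi v (gg k)| with hBad
  have hcover : (univ : Finset (Fin (2 ^ s) → Fin n → ZMod 2)) ⊆
      (univ.erase (0 : Fin n → ZMod 2)).biUnion Bad := by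
    intro gg _
    obtain ⟨v, hv, hlt⟩ := hcon gg
    exact Finset.mem_biUnion.mpr ⟨v, Finset.mem_erase.mpr ⟨hv, Finset.mem_univ v⟩,
      Finset.mem_filter.mpr ⟨Finset.mem_univ gg, hlt⟩⟩
  have hbound : ∀ v : Fin n → ZMod 2, v ≠ 0 →
      ((Bad v).card : ℝ) ≤ 2 * ((2:ℝ) ^ n) ^ (2 ^ s) * Real.exp (-(ρ ^ 2 * KR) / 2) := by
    intro v hv
    have key1 : ∀ lam : ℝ, Real.cosh lam = Real.cosh ρ →
        (((univ.filter fun gg : Fin (2 ^ s) → Fin n → ZMod 2 =>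
            ρ ^ 2 * KR ≤ lam * ∑ k, chi v (gg k)).card : ℝ))
          ≤ ((2:ℝ) ^ n) ^ (2 ^ s) * Real.exp (-(ρ ^ 2 * KR) / 2) := by
      intro lam hlam
      have h1 := tail_gen (s := s) v hv lam (ρ ^ 2 * KR)
      rw [hlam] at h1
      have hM : ((2:ℝ) ^ n * Real.cosh ρ) ^ (2 ^ s)
          ≤ ((2:ℝ) ^ n) ^ (2 ^ s) * Real.exp (ρ ^ 2 * KR / 2) := by
        calc ((2:ℝ) ^ n * Real.cosh ρ) ^ (2 ^ s)
            ≤ ((2:ℝ) ^ n * Real.exp (ρ ^ 2 / 2)) ^ (2 ^ s) := by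
              apply pow_le_pow_left₀ (by positivity)
              have h := Real.cosh_le_exp_half_sq ρ
              have h2 : (0:ℝ) < (2:ℝ) ^ n := by positivity
              nlinarith
          _ = ((2:ℝ) ^ n) ^ (2 ^ s) * Real.exp (ρ ^ 2 * KR / 2) := by
              rw [mul_pow, ← Real.exp_nat_mul]
              congr 1
              rw [hKRdef]
              push_cast
              ring
      have hE := Real.exp_pos (ρ ^ 2 * KR)
      rw [← mul_le_mul_iff_of_pos_right hE]
      calc ((univ.filter fun gg : Fin (2 ^ s) → Fin n → ZMod 2 =>
            ρ ^ 2 * KR ≤ lam * ∑ k, chi v (gg k)).card : ℝ) * Real.exp (ρ ^ 2 * KR)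
          ≤ ((2:ℝ) ^ n * Real.cosh ρ) ^ (2 ^ s) := h1
        _ ≤ ((2:ℝ) ^ n) ^ (2 ^ s) * Real.exp (ρ ^ 2 * KR / 2) := hM
        _ = ((2:ℝ) ^ n) ^ (2 ^ s) * Real.exp (-(ρ ^ 2 * KR) / 2) * Real.exp (ρ ^ 2 * KR) := by
            rw [mul_assoc, ← Real.exp_add]
            congr 2
            ring
    have hsplit : Bad v ⊆
        (univ.filter fun gg : Fin (2 ^ s) → Fin n → ZMod 2 =>
          ρ ^ 2 * KR ≤ ρ * ∑ k, chi v (gg k)) ∪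
        (univ.filter fun gg : Fin (2 ^ s) → Fin n → ZMod 2 =>
          ρ ^ 2 * KR ≤ (-ρ) * ∑ k, chi v (gg k)) := by
      intro gg hgg
      rw [hBad, Finset.mem_filter] at hgg
      rcases lt_abs.mp hgg.2 with h | h
      · exact Finset.mem_union_left _ (Finset.mem_filter.mpr ⟨Finset.mem_univ _, by nlinarith⟩)
      · exact Finset.mem_union_right _ (Finset.mem_filter.mpr ⟨Finset.mem_univ _, by nlinarith⟩)
    have hcard : ((Bad v).card : ℝ) ≤
        (((univ.filter fun gg : Fin (2 ^ s) → Fin n → ZMod 2 =>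
          ρ ^ 2 * KR ≤ ρ * ∑ k, chi v (gg k)).card : ℝ)) +
        (((univ.filter fun gg : Fin (2 ^ s) → Fin n → ZMod 2 =>
          ρ ^ 2 * KR ≤ (-ρ) * ∑ k, chi v (gg k)).card : ℝ)) := by
      have := le_trans (Finset.card_le_card hsplit) (Finset.card_union_le _ _)
      exact_mod_cast this
    have hp := key1 ρ rfl
    have hm := key1 (-ρ) (Real.cosh_neg ρ)
    linarith
  -- total count
  have hcardV : Fintype.card (Fin (2 ^ s) → Fin n → ZMod 2) = (2 ^ n) ^ (2 ^ s) := by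
    rw [Fintype.card_fun, card_V, Fintype.card_fin]
  have htot : (((2:ℝ) ^ n) ^ (2 ^ s) : ℝ) ≤
      ((2:ℝ) ^ n) * (2 * ((2:ℝ) ^ n) ^ (2 ^ s) * Real.exp (-(ρ ^ 2 * KR) / 2)) := by
    have h1 : ((Fintype.card (Fin (2 ^ s) → Fin n → ZMod 2) : ℕ) : ℝ) ≤
        ∑ v ∈ univ.erase (0 : Fin n → ZMod 2), ((Bad v).card : ℝ) := by
      have ha := Finset.card_le_card hcover
      have hb := Finset.card_biUnion_le (s := univ.erase (0 : Fin n → ZMod 2)) (t := Bad)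
      rw [Finset.card_univ] at ha
      have : (Fintype.card (Fin (2 ^ s) → Fin n → ZMod 2) : ℕ) ≤
          ∑ v ∈ univ.erase (0 : Fin n → ZMod 2), (Bad v).card := le_trans ha hb
      exact_mod_cast this
    have h2 : ∑ v ∈ univ.erase (0 : Fin n → ZMod 2), ((Bad v).card : ℝ) ≤
        ((2:ℝ) ^ n) * (2 * ((2:ℝ) ^ n) ^ (2 ^ s) * Real.exp (-(ρ ^ 2 * KR) / 2)) := by
      calc ∑ v ∈ univ.erase (0 : Fin n → ZMod 2), ((Bad v).card : ℝ)
          ≤ ∑ v ∈ univ.erase (0 : Fin n → ZMod 2),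
              (2 * ((2:ℝ) ^ n) ^ (2 ^ s) * Real.exp (-(ρ ^ 2 * KR) / 2)) := by
            refine Finset.sum_le_sum fun v hv => ?_
            exact hbound v (Finset.mem_erase.mp hv).1
        _ = ((univ.erase (0 : Fin n → ZMod 2)).card : ℝ) *
              (2 * ((2:ℝ) ^ n) ^ (2 ^ s) * Real.exp (-(ρ ^ 2 * KR) / 2)) := by
            rw [Finset.sum_const, nsmul_eq_mul]
        _ ≤ ((2:ℝ) ^ n) * (2 * ((2:ℝ) ^ n) ^ (2 ^ s) * Real.exp (-(ρ ^ 2 * KR) / 2)) := by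
            have hc : ((univ.erase (0 : Fin n → ZMod 2)).card : ℝ) ≤ (2:ℝ) ^ n := by
              have := Finset.card_erase_le (a := (0 : Fin n → ZMod 2)) (s := univ)
              rw [Finset.card_univ, card_V] at this
              exact_mod_cast this
            have hpos : (0:ℝ) ≤ 2 * ((2:ℝ) ^ n) ^ (2 ^ s) * Real.exp (-(ρ ^ 2 * KR) / 2) := by
              positivity
            exact mul_le_mul_of_nonneg_right hc hpos
    calc (((2:ℝ) ^ n) ^ (2 ^ s) : ℝ)
        = ((Fintype.card (Fin (2 ^ s) → Fin n → ZMod 2) : ℕ) : ℝ) := by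
          rw [hcardV]; push_cast; ring
      _ ≤ _ := le_trans h1 h2
  have h1le : 1 ≤ (2:ℝ) ^ n * 2 * Real.exp (-(ρ ^ 2 * KR) / 2) := by
    have hP : (0:ℝ) < ((2:ℝ) ^ n) ^ (2 ^ s) := by positivity
    nlinarith [Real.exp_pos (-(ρ ^ 2 * KR) / 2)]
  have hEX : Real.exp (ρ ^ 2 * KR / 2) ≤ (2:ℝ) ^ (n + 1) := by
    have h := mul_le_mul_of_nonneg_right h1le (Real.exp_pos (ρ ^ 2 * KR / 2)).le
    rw [one_mul, mul_assoc, ← Real.exp_add] at h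
    calc Real.exp (ρ ^ 2 * KR / 2)
        ≤ (2:ℝ) ^ n * 2 * Real.exp (-(ρ ^ 2 * KR) / 2 + ρ ^ 2 * KR / 2) := h
      _ = (2:ℝ) ^ (n + 1) := by
          rw [show -(ρ ^ 2 * KR) / 2 + ρ ^ 2 * KR / 2 = 0 by ring, Real.exp_zero, pow_succ]
          ring
  have hX : (2 * n : ℝ) ≤ ρ ^ 2 * KR / 2 := by
    have hρ2 : (0:ℝ) < ρ ^ 2 := by positivity
    rw [div_le_iff₀ hρ2] at hK
    nlinarith
  have hlog : (2 * n : ℝ) ≤ (n + 1) * Real.log 2 := by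
    have h2 : Real.exp (2 * n) ≤ (2:ℝ) ^ (n + 1) :=
      le_trans (Real.exp_le_exp.mpr hX) hEX
    have h3 := Real.log_le_log (Real.exp_pos _) h2
    rw [Real.log_exp, Real.log_pow] at h3
    push_cast at h3
    linarith
  have hlog2 : Real.log 2 < 0.6931471808 := Real.log_two_lt_d9
  have hn1 : (1:ℝ) ≤ n := by exact_mod_cast hn
  nlinarith

variable {n s : ℕ}

lemma corr_le {ρ : ℝ} (hρ0 : 0 ≤ ρ) (g : Fin (2 ^ s) → Fin n → ZMod 2)
    (hg : ∀ v : Fin n → ZMod 2, v ≠ 0 → |∑ k, chi v (g k)| ≤ ρ * 2 ^ s) :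
    maxCorr (fun (m c : Fin n → ZMod 2) =>
        ((2 ^ n : ℝ))⁻¹ * ((2 ^ s : ℝ))⁻¹ *
          ((univ.filter fun k => m + g k = c).card : ℝ)) ≤ ρ := by
  apply Real.sSup_le _ hρ0
  rintro r ⟨f, f', h0f, h0g, h2f, h2g, hr⟩
  beta_reduce at h0f h0g h2f h2g hr
  have h2n : (2 ^ n : ℝ) ≠ 0 := by positivity
  have h2s : (2 ^ s : ℝ) ≠ 0 := by positivity
  -- card as a sum of indicators
  have hcard : ∀ m c : Fin n → ZMod 2,
      ((univ.filter fun k => m + g k = c).card : ℝ)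
        = ∑ k, if m + g k = c then (1:ℝ) else 0 := by
    intro m c
    rw [Finset.card_filter]
    push_cast
    rfl
  have hN : ∀ m : Fin n → ZMod 2,
      ∑ c, ((univ.filter fun k => m + g k = c).card : ℝ) = (2 ^ s : ℝ) := by
    intro m
    rw [Finset.sum_congr rfl fun c _ => hcard m c, Finset.sum_comm]
    have hone : ∀ k : Fin (2 ^ s),
        (∑ c, if m + g k = c then (1:ℝ) else 0) = 1 := by
      intro k
      rw [Finset.sum_ite_eq univ (m + g k) fun _ => (1:ℝ)]
      simp
    rw [Finset.sum_congr rfl fun k _ => hone k, Finset.sum_const, Finset.card_univ,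
      Fintype.card_fin, nsmul_eq_mul]
    push_cast
    ring
  have hM : ∀ c : Fin n → ZMod 2,
      ∑ m, ((univ.filter fun k => m + g k = c).card : ℝ) = (2 ^ s : ℝ) := by
    intro c
    rw [Finset.sum_congr rfl fun m _ => hcard m c, Finset.sum_comm]
    have hone : ∀ k : Fin (2 ^ s),
        (∑ m, if m + g k = c then (1:ℝ) else 0) = 1 := by
      intro k
      have hiff : ∀ m : Fin n → ZMod 2, (m + g k = c) ↔ (c + g k = m) := by
        intro m
        constructor
        · rintro rfl; rw [add_assoc, vadd_self, add_zero]
        · rintro rfl; rw [add_assoc, vadd_self, add_zero]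
      rw [Finset.sum_congr rfl fun m _ => by rw [if_congr (hiff m) rfl rfl]]
      rw [Finset.sum_ite_eq univ (c + g k) fun _ => (1:ℝ)]
      simp
    rw [Finset.sum_congr rfl fun k _ => hone k, Finset.sum_const, Finset.card_univ,
      Fintype.card_fin, nsmul_eq_mul]
    push_cast
    ring
  -- the weighted marginals
  have left_sum : ∀ w : (Fin n → ZMod 2) → ℝ,
      (∑ m, ∑ c, ((2 ^ n : ℝ))⁻¹ * ((2 ^ s : ℝ))⁻¹ *
        ((univ.filter fun k => m + g k = c).card : ℝ) * w m)
        = (2 ^ n : ℝ)⁻¹ * ∑ m, w m := by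
    intro w
    rw [Finset.mul_sum]
    refine Finset.sum_congr rfl fun m _ => ?_
    rw [← Finset.sum_mul, ← Finset.mul_sum, hN m]
    field_simp
  have right_sum : ∀ w : (Fin n → ZMod 2) → ℝ,
      (∑ m, ∑ c, ((2 ^ n : ℝ))⁻¹ * ((2 ^ s : ℝ))⁻¹ *
        ((univ.filter fun k => m + g k = c).card : ℝ) * w c)
        = (2 ^ n : ℝ)⁻¹ * ∑ c, w c := by
    intro w
    rw [Finset.sum_comm, Finset.mul_sum]
    refine Finset.sum_congr rfl fun c _ => ?_
    rw [← Finset.sum_mul, ← Finset.mul_sum, hM c]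
    field_simp
  -- Fourier coefficients
  have hf0 : hat f 0 = 0 := by
    rw [hat_zero]
    rw [left_sum f] at h0f
    exact h0f
  have hf'0 : hat f' 0 = 0 := by
    rw [hat_zero]
    rw [right_sum f'] at h0g
    exact h0g
  have hPf : ∑ v, hat f v ^ 2 = 1 := by
    rw [parseval]
    rw [left_sum (fun m => f m ^ 2)] at h2f
    exact h2f
  have hPf' : ∑ v, hat f' v ^ 2 = 1 := by
    rw [parseval]
    rw [right_sum (fun c => f' c ^ 2)] at h2g
    exact h2g
  -- rewrite r
  have er : r = ∑ v, hat f v * hat f' v * ((2 ^ s : ℝ)⁻¹ * ∑ k, chi v (g k)) := by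
    rw [hr]
    have step1 : ∀ m : Fin n → ZMod 2,
        (∑ c, ((2 ^ n : ℝ))⁻¹ * ((2 ^ s : ℝ))⁻¹ *
          ((univ.filter fun k => m + g k = c).card : ℝ) * f m * f' c)
          = ((2 ^ n : ℝ))⁻¹ * ((2 ^ s : ℝ))⁻¹ * f m * ∑ k, f' (m + g k) := by
      intro m
      have e1 : ∀ c : Fin n → ZMod 2,
          ((2 ^ n : ℝ))⁻¹ * ((2 ^ s : ℝ))⁻¹ *
            ((univ.filter fun k => m + g k = c).card : ℝ) * f m * f' c
          = ((2 ^ n : ℝ))⁻¹ * ((2 ^ s : ℝ))⁻¹ * f m *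
              ∑ k, (if m + g k = c then (1:ℝ) else 0) * f' c := by
        intro c
        rw [hcard m c]
        simp only [Finset.sum_mul, Finset.mul_sum]
        exact Finset.sum_congr rfl fun k _ => by ring
      rw [Finset.sum_congr rfl fun c _ => e1 c, ← Finset.mul_sum, Finset.sum_comm]
      congr 1
      refine Finset.sum_congr rfl fun k _ => ?_
      have : ∀ c : Fin n → ZMod 2, (if m + g k = c then (1:ℝ) else 0) * f' c
          = if m + g k = c then f' c else 0 := by
        intro c; split <;> simp
      rw [Finset.sum_congr rfl fun c _ => this c,
        Finset.sum_ite_eq univ (m + g k) fun c => f' c]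
      simp
    have step2 : ∑ m, ((2 ^ n : ℝ))⁻¹ * ((2 ^ s : ℝ))⁻¹ * f m * ∑ k, f' (m + g k)
        = ((2 ^ n : ℝ))⁻¹ * ((2 ^ s : ℝ))⁻¹ * ∑ k, ∑ m, f m * f' (m + g k) := by
      have e2 : ∀ m : Fin n → ZMod 2,
          ((2 ^ n : ℝ))⁻¹ * ((2 ^ s : ℝ))⁻¹ * f m * ∑ k, f' (m + g k)
            = ∑ k, ((2 ^ n : ℝ))⁻¹ * ((2 ^ s : ℝ))⁻¹ * (f m * f' (m + g k)) := by
        intro m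
        rw [Finset.mul_sum]
        exact Finset.sum_congr rfl fun k _ => by ring
      rw [Finset.sum_congr rfl fun m _ => e2 m, Finset.sum_comm, Finset.mul_sum]
      exact Finset.sum_congr rfl fun k _ => (Finset.mul_sum _ _ _).symm
    rw [Finset.sum_congr rfl fun m _ => step1 m, step2,
      Finset.sum_congr rfl fun k _ => key f f' (g k)]
    have e3 : ∀ k : Fin (2 ^ s), (2 ^ n : ℝ) * ∑ v, hat f v * hat f' v * chi v (g k)
        = ∑ v, (2 ^ n : ℝ) * (hat f v * hat f' v * chi v (g k)) := fun k => Finset.mul_sum _ _ _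
    rw [Finset.sum_congr rfl fun k _ => e3 k, Finset.sum_comm, Finset.mul_sum]
    refine Finset.sum_congr rfl fun v _ => ?_
    have e4 : ∑ k, (2 ^ n : ℝ) * (hat f v * hat f' v * chi v (g k))
        = ((2 ^ n : ℝ) * (hat f v * hat f' v)) * ∑ k, chi v (g k) := by
      calc ∑ k, (2 ^ n : ℝ) * (hat f v * hat f' v * chi v (g k))
          = ∑ k, ((2 ^ n : ℝ) * (hat f v * hat f' v)) * chi v (g k) :=
            Finset.sum_congr rfl fun k _ => by ring
        _ = ((2 ^ n : ℝ) * (hat f v * hat f' v)) * ∑ k, chi v (g k) :=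
            (Finset.mul_sum _ _ _).symm
    rw [e4]
    field_simp
  -- bound
  have habs : ∀ v : Fin n → ZMod 2,
      |hat f v * hat f' v * ((2 ^ s : ℝ)⁻¹ * ∑ k, chi v (g k))|
        ≤ ρ * (|hat f v| * |hat f' v|) := by
    intro v
    by_cases hv : v = 0
    · subst hv
      rw [hf0]
      simp
    · have hb : |(2 ^ s : ℝ)⁻¹ * ∑ k, chi v (g k)| ≤ ρ := by
        rw [abs_mul, abs_inv, abs_of_pos (show (0:ℝ) < (2 ^ s : ℝ) by positivity)]
        rw [inv_mul_le_iff₀ (show (0:ℝ) < (2 ^ s : ℝ) by positivity)]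
        calc |∑ k, chi v (g k)| ≤ ρ * 2 ^ s := hg v hv
          _ = 2 ^ s * ρ := by ring
      calc |hat f v * hat f' v * ((2 ^ s : ℝ)⁻¹ * ∑ k, chi v (g k))|
          = |hat f v| * |hat f' v| * |(2 ^ s : ℝ)⁻¹ * ∑ k, chi v (g k)| := by
            rw [abs_mul, abs_mul]
        _ ≤ |hat f v| * |hat f' v| * ρ :=
            mul_le_mul_of_nonneg_left hb (by positivity)
        _ = ρ * (|hat f v| * |hat f' v|) := by ring
  have hCS : ∑ v, |hat f v| * |hat f' v| ≤ 1 := by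
    have h := Finset.sum_mul_sq_le_sq_mul_sq univ (fun v => |hat f v|) (fun v => |hat f' v|)
    simp only [sq_abs] at h
    rw [hPf, hPf', one_mul] at h
    have hnn : (0:ℝ) ≤ ∑ v, |hat f v| * |hat f' v| :=
      Finset.sum_nonneg fun v _ => mul_nonneg (abs_nonneg _) (abs_nonneg _)
    nlinarith
  calc r ≤ |r| := le_abs_self r
    _ ≤ ∑ v, |hat f v * hat f' v * ((2 ^ s : ℝ)⁻¹ * ∑ k, chi v (g k))| := by
        rw [er]; exact Finset.abs_sum_le_sum_abs _ _
    _ ≤ ∑ v, ρ * (|hat f v| * |hat f' v|) := Finset.sum_le_sum fun v _ => habs v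
    _ = ρ * ∑ v, |hat f v| * |hat f' v| := by rw [Finset.mul_sum]
    _ ≤ ρ * 1 := mul_le_mul_of_nonneg_left hCS hρ0
    _ = ρ := mul_one ρ

end Stmt12Aux

theorem stmt12 (n : ℕ) (hn : 1 ≤ n) (ρ : ℝ) (hρ0 : 0 < ρ) (hρ1 : ρ < 1)
    (s : ℕ) (hs : s = ⌈2 * Real.logb 2 (1 / ρ) + Real.logb 2 (n : ℝ) + 2⌉₊) :
    ∃ g : Fin (2 ^ s) → Fin n → ZMod 2,
      maxCorr (fun (m c : Fin n → ZMod 2) =>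
        ((2 ^ n : ℝ))⁻¹ * ((2 ^ s : ℝ))⁻¹ *
          ((univ.filter fun k => m + g k = c).card : ℝ)) ≤ ρ := by
  have hK : 4 * (n : ℝ) / ρ ^ 2 ≤ (2 ^ s : ℝ) := by
    have ha : (2 * Real.logb 2 (1 / ρ) + Real.logb 2 (n : ℝ) + 2 : ℝ) ≤ (s : ℝ) := by
      rw [hs]; exact Nat.le_ceil _
    have hn0 : (0:ℝ) < (n : ℝ) := by exact_mod_cast hn
    have h1 : ((2:ℝ) ^ (2 * Real.logb 2 (1 / ρ) + Real.logb 2 (n : ℝ) + 2 : ℝ))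
        ≤ (2:ℝ) ^ ((s : ℕ) : ℝ) :=
      Real.rpow_le_rpow_of_exponent_le one_le_two ha
    rw [Real.rpow_natCast] at h1
    have h2 : ((2:ℝ) ^ (2 * Real.logb 2 (1 / ρ) + Real.logb 2 (n : ℝ) + 2 : ℝ))
        = (1 / ρ) ^ 2 * (n : ℝ) * 4 := by
      rw [Real.rpow_add two_pos, Real.rpow_add two_pos]
      congr 1
      · congr 1
        · rw [mul_comm (2:ℝ) (Real.logb 2 (1 / ρ)), Real.rpow_mul (by norm_num : (0:ℝ) ≤ 2)]
          rw [Real.rpow_logb two_pos (by norm_num) (by positivity)]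
          rw [show ((2:ℝ):ℝ) = ((2:ℕ):ℝ) by norm_num, Real.rpow_natCast]
        · exact Real.rpow_logb two_pos (by norm_num) hn0
      · rw [show ((2:ℝ):ℝ) = ((2:ℕ):ℝ) by norm_num, Real.rpow_natCast]
        norm_num
    rw [h2] at h1
    rw [div_le_iff₀ (by positivity : (0:ℝ) < ρ ^ 2)]
    calc 4 * (n:ℝ) = ((1 / ρ) ^ 2 * (n:ℝ) * 4) * ρ ^ 2 := by
          field_simp
        _ ≤ (2 ^ s : ℝ) * ρ ^ 2 := by
          apply mul_le_mul_of_nonneg_right h1 (by positivity)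
  obtain ⟨g, hg⟩ := Stmt12Aux.exists_good (s := s) hn hρ0 hK
  exact ⟨g, Stmt12Aux.corr_le hρ0.le g hg⟩
end

section
/- Let p_M and p̂_M be two pmfs on a finite set ℳ with p_M strictly positive, and let p_{C|M} be a Markov kernel to a finite set 𝒞. Let ℙ and ℙ̂ be the joint laws of (M,C) induced by p_M and p̂_M respectively (with the same kernel), and let ρ_m(M;C) be the maximal correlation under ℙ. Then for any functions f: ℳ → ℕ and f̃: 𝒞 → ℕ, |ℙ̂{f(M)=f̃(C)} − Σ_i ℙ̂{f(M)=i}·ℙ{f̃(C)=i}| ≤ ρ_m(M;C)·√(χ²(p̂_M ‖ p_M) + 1). -/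
open BigOperators Finset
open scoped Classical

lemma wCS {ι : Type*} [Fintype ι] (w a b : ι → ℝ) (hw : ∀ i, 0 ≤ w i) :
    (∑ i, w i * a i * b i) ^ 2 ≤ (∑ i, w i * a i ^ 2) * (∑ i, w i * b i ^ 2) := by
  have h := Finset.sum_mul_sq_le_sq_mul_sq Finset.univ
    (fun i => Real.sqrt (w i) * a i) (fun i => Real.sqrt (w i) * b i)
  have e1 : ∀ i : ι, (Real.sqrt (w i) * a i) * (Real.sqrt (w i) * b i) = w i * a i * b i := by
    intro i
    rw [show (Real.sqrt (w i) * a i) * (Real.sqrt (w i) * b i)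
        = (Real.sqrt (w i) * Real.sqrt (w i)) * (a i * b i) by ring,
      Real.mul_self_sqrt (hw i)]; ring
  have e2 : ∀ i : ι, (Real.sqrt (w i) * a i) ^ 2 = w i * a i ^ 2 := by
    intro i; rw [mul_pow, Real.sq_sqrt (hw i)]
  have e3 : ∀ i : ι, (Real.sqrt (w i) * b i) ^ 2 = w i * b i ^ 2 := by
    intro i; rw [mul_pow, Real.sq_sqrt (hw i)]
  simpa only [e1, e2, e3] using h

lemma wCS2 {X Y : Type*} [Fintype X] [Fintype Y] (P a b : X → Y → ℝ)
    (hP : ∀ x y, 0 ≤ P x y) :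
    (∑ x, ∑ y, P x y * a x y * b x y) ^ 2 ≤
      (∑ x, ∑ y, P x y * a x y ^ 2) * (∑ x, ∑ y, P x y * b x y ^ 2) := by
  have h := wCS (fun q : X × Y => P q.1 q.2) (fun q => a q.1 q.2) (fun q => b q.1 q.2)
    (fun q => hP q.1 q.2)
  simpa only [Fintype.sum_prod_type] using h

lemma maxCorr_bdd {X Y : Type*} [Fintype X] [Fintype Y] (p : X → Y → ℝ)
    (hp : ∀ x y, 0 ≤ p x y) :
    BddAbove {r : ℝ | ∃ f : X → ℝ, ∃ g : Y → ℝ,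
    (∑ x, ∑ y, p x y * f x) = 0 ∧
    (∑ x, ∑ y, p x y * g y) = 0 ∧
    (∑ x, ∑ y, p x y * (f x) ^ 2) = 1 ∧
    (∑ x, ∑ y, p x y * (g y) ^ 2) = 1 ∧
    r = ∑ x, ∑ y, p x y * f x * g y} := by
  refine ⟨1, ?_⟩
  rintro r ⟨f, g, -, -, hf2, hg2, rfl⟩
  have h := wCS2 p (fun x _ => f x) (fun _ y => g y) hp
  rw [hf2, hg2, one_mul] at h
  nlinarith [h]

lemma maxCorr_nonneg {X Y : Type*} [Fintype X] [Fintype Y] (p : X → Y → ℝ)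
    (hp : ∀ x y, 0 ≤ p x y) : 0 ≤ maxCorr p := by
  set S := {r : ℝ | ∃ f : X → ℝ, ∃ g : Y → ℝ,
    (∑ x, ∑ y, p x y * f x) = 0 ∧
    (∑ x, ∑ y, p x y * g y) = 0 ∧
    (∑ x, ∑ y, p x y * (f x) ^ 2) = 1 ∧
    (∑ x, ∑ y, p x y * (g y) ^ 2) = 1 ∧
    r = ∑ x, ∑ y, p x y * f x * g y} with hS
  rcases Set.eq_empty_or_nonempty S with h | ⟨r, hr⟩
  · simp only [maxCorr, ← hS, h, Real.sSup_empty, le_refl]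
  · obtain ⟨f, g, h1, h2, h3, h4, h5⟩ := hr
    have hmem : (-r) ∈ S := by
      refine ⟨fun x => -f x, g, ?_, h2, ?_, h4, ?_⟩
      · simp only [mul_neg, Finset.sum_neg_distrib, h1, neg_zero]
      · simpa only [neg_sq] using h3
      · rw [h5]; simp only [mul_neg, neg_mul, Finset.sum_neg_distrib]
    have hb := maxCorr_bdd p hp
    have h6 : r ≤ maxCorr p := le_csSup hb (by exact ⟨f, g, h1, h2, h3, h4, h5⟩)
    have h7 : (-r) ≤ maxCorr p := le_csSup hb hmem
    linarith

lemma cent_mean {ι : Type*} [Fintype ι] (w a : ι → ℝ) (h1 : ∑ i, w i = 1) :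
    ∑ i, w i * (a i - ∑ j, w j * a j) = 0 := by
  simp only [mul_sub, Finset.sum_sub_distrib, ← Finset.sum_mul, h1, one_mul, sub_self]

lemma cent_var {ι : Type*} [Fintype ι] (w a : ι → ℝ) (h1 : ∑ i, w i = 1) :
    ∑ i, w i * (a i - ∑ j, w j * a j) ^ 2
      = (∑ i, w i * a i ^ 2) - (∑ i, w i * a i) ^ 2 := by
  set μ := ∑ j, w j * a j with hμ
  have e : ∀ i, w i * (a i - μ) ^ 2
      = w i * a i ^ 2 - (w i * a i) * (2 * μ) + w i * μ ^ 2 := by intro i; ring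
  simp only [e, Finset.sum_add_distrib, Finset.sum_sub_distrib, ← Finset.sum_mul, h1, ← hμ]
  ring

lemma cent_cov {ι : Type*} [Fintype ι] (w a b : ι → ℝ) (h1 : ∑ i, w i = 1) :
    ∑ i, w i * (a i - ∑ j, w j * a j) * (b i - ∑ j, w j * b j)
      = (∑ i, w i * a i * b i) - (∑ i, w i * a i) * (∑ i, w i * b i) := by
  set μ := ∑ j, w j * a j with hμ
  set ν := ∑ j, w j * b j with hν
  have e : ∀ i, w i * (a i - μ) * (b i - ν)
      = w i * a i * b i - (w i * a i) * ν - (w i * b i) * μ + w i * (μ * ν) := by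
    intro i; ring
  simp only [e, Finset.sum_add_distrib, Finset.sum_sub_distrib, ← Finset.sum_mul, h1, ← hμ, ← hν]
  ring

lemma cov_bound {X Y : Type*} [Fintype X] [Fintype Y] (p : X → Y → ℝ)
    (hp : ∀ x y, 0 ≤ p x y) (h1 : (∑ x, ∑ y, p x y) = 1) (f : X → ℝ) (g : Y → ℝ) :
    (∑ x, ∑ y, p x y * f x * g y) - (∑ x, ∑ y, p x y * f x) * (∑ x, ∑ y, p x y * g y)
      ≤ maxCorr p * Real.sqrt ((∑ x, ∑ y, p x y * (f x) ^ 2) - (∑ x, ∑ y, p x y * f x) ^ 2)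
        * Real.sqrt ((∑ x, ∑ y, p x y * (g y) ^ 2) - (∑ x, ∑ y, p x y * g y) ^ 2) := by
  have hconv : ∀ F : X → Y → ℝ, (∑ x, ∑ y, F x y) = ∑ q : X × Y, F q.1 q.2 :=
    fun F => (Fintype.sum_prod_type (fun q : X × Y => F q.1 q.2)).symm
  have h1' : (∑ q : X × Y, p q.1 q.2) = 1 := by rw [← hconv]; exact h1
  set μ := ∑ x, ∑ y, p x y * f x with hμ
  set ν := ∑ x, ∑ y, p x y * g y with hν
  set V := (∑ x, ∑ y, p x y * (f x) ^ 2) - μ ^ 2 with hV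
  set Vt := (∑ x, ∑ y, p x y * (g y) ^ 2) - ν ^ 2 with hVt
  have hμ' : μ = ∑ q : X × Y, p q.1 q.2 * f q.1 := by rw [hμ, hconv (fun x y => p x y * f x)]
  have hν' : ν = ∑ q : X × Y, p q.1 q.2 * g q.2 := by rw [hν, hconv (fun x y => p x y * g y)]
  -- variance identities
  have hVc : (∑ x, ∑ y, p x y * (f x - μ) ^ 2) = V := by
    rw [hconv (fun x y => p x y * (f x - μ) ^ 2), hV,
      hconv (fun x y => p x y * (f x) ^ 2), hμ']
    exact cent_var (fun q : X × Y => p q.1 q.2) (fun q => f q.1) h1'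
  have hVtc : (∑ x, ∑ y, p x y * (g y - ν) ^ 2) = Vt := by
    rw [hconv (fun x y => p x y * (g y - ν) ^ 2), hVt,
      hconv (fun x y => p x y * (g y) ^ 2), hν']
    exact cent_var (fun q : X × Y => p q.1 q.2) (fun q => g q.2) h1'
  have hCovc : (∑ x, ∑ y, p x y * (f x - μ) * (g y - ν))
      = (∑ x, ∑ y, p x y * f x * g y) - μ * ν := by
    rw [hconv (fun x y => p x y * (f x - μ) * (g y - ν)),
      hconv (fun x y => p x y * f x * g y), hμ', hν']
    exact cent_cov (fun q : X × Y => p q.1 q.2) (fun q => f q.1) (fun q => g q.2) h1'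
  have hV0 : 0 ≤ V := by
    rw [← hVc]
    exact Finset.sum_nonneg fun x _ => Finset.sum_nonneg fun y _ =>
      mul_nonneg (hp x y) (sq_nonneg _)
  have hVt0 : 0 ≤ Vt := by
    rw [← hVtc]
    exact Finset.sum_nonneg fun x _ => Finset.sum_nonneg fun y _ =>
      mul_nonneg (hp x y) (sq_nonneg _)
  set Cov := (∑ x, ∑ y, p x y * f x * g y) - μ * ν with hCov
  have hCS : Cov ^ 2 ≤ V * Vt := by
    have := wCS2 p (fun x _ => f x - μ) (fun _ y => g y - ν) hp
    rw [hVc, hVtc, hCovc] at this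
    exact this
  have hρ : 0 ≤ maxCorr p := maxCorr_nonneg p hp
  by_cases hpos : 0 < V ∧ 0 < Vt
  · obtain ⟨hVp, hVtp⟩ := hpos
    have hsV : (0:ℝ) < Real.sqrt V := Real.sqrt_pos.2 hVp
    have hsVt : (0:ℝ) < Real.sqrt Vt := Real.sqrt_pos.2 hVtp
    have hsV2 : Real.sqrt V ^ 2 = V := Real.sq_sqrt hV0
    have hsVt2 : Real.sqrt Vt ^ 2 = Vt := Real.sq_sqrt hVt0
    set F := fun x => (f x - μ) * (Real.sqrt V)⁻¹ with hF
    set G := fun y => (g y - ν) * (Real.sqrt Vt)⁻¹ with hG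
    have pull : ∀ (c : ℝ) (h : X → Y → ℝ),
        (∑ x, ∑ y, h x y * c) = (∑ x, ∑ y, h x y) * c := by
      intro c h
      calc ∑ x, ∑ y, h x y * c = ∑ x, (∑ y, h x y) * c :=
            Finset.sum_congr rfl fun x _ => (Finset.sum_mul _ _ _).symm
        _ = (∑ x, ∑ y, h x y) * c := (Finset.sum_mul _ _ _).symm
    have c1 : (∑ x, ∑ y, p x y * F x) = 0 := by
      have e : ∀ x y, p x y * F x = (p x y * (f x - μ)) * (Real.sqrt V)⁻¹ := by
        intro x y; rw [hF]; ring
      simp only [e]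
      rw [pull, hconv (fun x y => p x y * (f x - μ)), hμ']
      rw [show (∑ q : X × Y, p q.1 q.2 * (f q.1 - ∑ q : X × Y, p q.1 q.2 * f q.1)) = 0 from
        cent_mean (fun q : X × Y => p q.1 q.2) (fun q => f q.1) h1', zero_mul]
    have c2 : (∑ x, ∑ y, p x y * G y) = 0 := by
      have e : ∀ x y, p x y * G y = (p x y * (g y - ν)) * (Real.sqrt Vt)⁻¹ := by
        intro x y; rw [hG]; ring
      simp only [e]
      rw [pull, hconv (fun x y => p x y * (g y - ν)), hν']
      rw [show (∑ q : X × Y, p q.1 q.2 * (g q.2 - ∑ q : X × Y, p q.1 q.2 * g q.2)) = 0 from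
        cent_mean (fun q : X × Y => p q.1 q.2) (fun q => g q.2) h1', zero_mul]
    have c3 : (∑ x, ∑ y, p x y * (F x) ^ 2) = 1 := by
      have hinv : ((Real.sqrt V)⁻¹) ^ 2 = V⁻¹ := by rw [inv_pow, hsV2]
      have e : ∀ x y, p x y * (F x) ^ 2 = (p x y * (f x - μ) ^ 2) * (V⁻¹) := by
        intro x y; rw [hF]; simp only [mul_pow, hinv]; ring
      simp only [e]
      rw [pull, hVc]
      field_simp
    have c4 : (∑ x, ∑ y, p x y * (G y) ^ 2) = 1 := by
      have hinv : ((Real.sqrt Vt)⁻¹) ^ 2 = Vt⁻¹ := by rw [inv_pow, hsVt2]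
      have e : ∀ x y, p x y * (G y) ^ 2 = (p x y * (g y - ν) ^ 2) * (Vt⁻¹) := by
        intro x y; rw [hG]; simp only [mul_pow, hinv]; ring
      simp only [e]
      rw [pull, hVtc]
      field_simp
    have c5 : (∑ x, ∑ y, p x y * F x * G y)
        = Cov * ((Real.sqrt V)⁻¹ * (Real.sqrt Vt)⁻¹) := by
      have e : ∀ x y, p x y * F x * G y
          = (p x y * (f x - μ) * (g y - ν)) * ((Real.sqrt V)⁻¹ * (Real.sqrt Vt)⁻¹) := by
        intro x y; rw [hF, hG]; ring
      simp only [e]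
      rw [pull, hCovc]
    have hmem : Cov * ((Real.sqrt V)⁻¹ * (Real.sqrt Vt)⁻¹) ≤ maxCorr p :=
      le_csSup (maxCorr_bdd p hp) ⟨F, G, c1, c2, c3, c4, c5.symm⟩
    have key : Cov = (Cov * ((Real.sqrt V)⁻¹ * (Real.sqrt Vt)⁻¹))
        * (Real.sqrt V * Real.sqrt Vt) := by
      field_simp
    rw [key]
    have := mul_le_mul_of_nonneg_right hmem
      (le_of_lt (mul_pos hsV hsVt))
    calc (Cov * ((Real.sqrt V)⁻¹ * (Real.sqrt Vt)⁻¹)) * (Real.sqrt V * Real.sqrt Vt)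
        ≤ maxCorr p * (Real.sqrt V * Real.sqrt Vt) := this
      _ = maxCorr p * Real.sqrt V * Real.sqrt Vt := by ring
  · -- degenerate case : V * Vt = 0
    have hprod : V * Vt = 0 := by
      rcases (not_and_or.1 hpos) with h | h
      · have : V = 0 := le_antisymm (not_lt.1 h) hV0
        rw [this, zero_mul]
      · have : Vt = 0 := le_antisymm (not_lt.1 h) hVt0
        rw [this, mul_zero]
    have hc0 : Cov = 0 := by
      have : Cov ^ 2 ≤ 0 := hprod ▸ hCS
      nlinarith [sq_nonneg Cov]
    rw [hc0]
    exact mul_nonneg (mul_nonneg hρ (Real.sqrt_nonneg _)) (Real.sqrt_nonneg _)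

lemma cov_bound_abs {X Y : Type*} [Fintype X] [Fintype Y] (p : X → Y → ℝ)
    (hp : ∀ x y, 0 ≤ p x y) (h1 : (∑ x, ∑ y, p x y) = 1) (f : X → ℝ) (g : Y → ℝ) :
    |(∑ x, ∑ y, p x y * f x * g y) - (∑ x, ∑ y, p x y * f x) * (∑ x, ∑ y, p x y * g y)|
      ≤ maxCorr p * Real.sqrt ((∑ x, ∑ y, p x y * (f x) ^ 2) - (∑ x, ∑ y, p x y * f x) ^ 2)
        * Real.sqrt ((∑ x, ∑ y, p x y * (g y) ^ 2) - (∑ x, ∑ y, p x y * g y) ^ 2) := by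
  have h2 := cov_bound p hp h1 (fun x => -f x) g
  have h3 := cov_bound p hp h1 f g
  simp only [mul_neg, neg_mul, Finset.sum_neg_distrib, neg_sq] at h2
  rw [abs_le]
  constructor
  · nlinarith [h2]
  · exact h3

lemma var_nonneg2 {X Y : Type*} [Fintype X] [Fintype Y] (p a : X → Y → ℝ)
    (hp : ∀ x y, 0 ≤ p x y) (h1 : (∑ x, ∑ y, p x y) = 1) :
    0 ≤ (∑ x, ∑ y, p x y * a x y ^ 2) - (∑ x, ∑ y, p x y * a x y) ^ 2 := by
  have h := wCS2 p a (fun _ _ => 1) hp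
  simp only [mul_one, one_pow, h1, mul_one] at h
  linarith

theorem stmt13 {M C : Type*} [Fintype M] [Fintype C]
    (p phat : M → ℝ) (hp : ∀ m, 0 < p m) (hp1 : ∑ m, p m = 1)
    (hphat : ∀ m, 0 ≤ phat m) (hphat1 : ∑ m, phat m = 1)
    (W : M → C → ℝ) (hW : ∀ m c, 0 ≤ W m c) (hW1 : ∀ m, ∑ c, W m c = 1)
    (f : M → ℕ) (ftilde : C → ℕ) :
    |(∑ m, ∑ c, phat m * W m c * (if f m = ftilde c then 1 else 0)) -
      ∑' i : ℕ, (∑ m, if f m = i then phat m else 0) *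
        (∑ m, ∑ c, (if ftilde c = i then p m * W m c else 0))| ≤
    maxCorr (fun m c => p m * W m c) *
      Real.sqrt ((∑ m, (phat m) ^ 2 / p m - 1) + 1) := by
  classical
  set P := fun m c => p m * W m c with hPdef
  have hP : ∀ m c, 0 ≤ P m c := fun m c => mul_nonneg (hp m).le (hW m c)
  have hmarg : ∀ m, (∑ c, P m c) = p m := by
    intro m; rw [hPdef]; simp only [← Finset.mul_sum, hW1, mul_one]
  have hP1 : (∑ m, ∑ c, P m c) = 1 := by simp only [hmarg, hp1]
  set s : Finset ℕ := Finset.image f Finset.univ with hs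
  have hfs : ∀ m, f m ∈ s := fun m => Finset.mem_image_of_mem f (Finset.mem_univ m)
  set g : ℕ → M → ℝ := fun i m => (if f m = i then 1 else 0) * (phat m / p m) with hg
  set gt : ℕ → C → ℝ := fun i c => if ftilde c = i then 1 else 0 with hgt
  have hρ : 0 ≤ maxCorr P := maxCorr_nonneg P hP
  -- tsum to finite sum
  have htsum : (∑' i : ℕ, (∑ m, if f m = i then phat m else 0) *
      (∑ m, ∑ c, (if ftilde c = i then p m * W m c else 0)))
      = ∑ i ∈ s, (∑ m, if f m = i then phat m else 0) *
        (∑ m, ∑ c, (if ftilde c = i then p m * W m c else 0)) := by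
    apply tsum_eq_sum
    intro i hi
    have h0 : (∑ m, if f m = i then phat m else 0) = 0 := by
      apply Finset.sum_eq_zero; intro m _
      rw [if_neg]; intro h; exact hi (h ▸ hfs m)
    rw [h0, zero_mul]
  rw [htsum]
  -- double sum identity
  have hsum1 : (∑ i ∈ s, ∑ m, ∑ c, P m c * g i m * gt i c)
      = ∑ m, ∑ c, phat m * W m c * (if f m = ftilde c then 1 else 0) := by
    rw [Finset.sum_comm]
    refine Finset.sum_congr rfl fun m _ => ?_
    rw [Finset.sum_comm]
    refine Finset.sum_congr rfl fun c _ => ?_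
    rw [Finset.sum_eq_single (f m)]
    · simp only [hg, hgt, hPdef, if_pos rfl, one_mul]
      have hpm : p m ≠ 0 := (hp m).ne'
      by_cases h : f m = ftilde c
      · rw [if_pos h.symm, if_pos h]
        field_simp; rw [if_pos trivial]; ring
      · rw [if_neg (fun hh : ftilde c = f m => h hh.symm), if_neg h]
        ring
    · intro j _ hne
      simp only [hg, if_neg (fun h : f m = j => hne h.symm), zero_mul, mul_zero]
    · intro habs; exact absurd (hfs m) habs
  rw [← hsum1]
  -- factor identities
  have hB : ∀ i, (∑ m, ∑ c, P m c * g i m) = (∑ m, if f m = i then phat m else 0) := by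
    intro i
    refine Finset.sum_congr rfl fun m _ => ?_
    rw [← Finset.sum_mul, hmarg]
    simp only [hg]
    have hpm : p m ≠ 0 := (hp m).ne'
    by_cases h : f m = i
    · rw [if_pos h, if_pos h, one_mul]
      field_simp
    · rw [if_neg h, if_neg h, zero_mul, mul_zero]
  have hD : ∀ i, (∑ m, ∑ c, P m c * gt i c)
      = (∑ m, ∑ c, (if ftilde c = i then p m * W m c else 0)) := by
    intro i
    refine Finset.sum_congr rfl fun m _ => Finset.sum_congr rfl fun c _ => ?_
    simp only [hgt, hPdef, mul_ite, mul_one, mul_zero]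
  have hTBD : ∀ i ∈ s, (∑ m, if f m = i then phat m else 0) *
        (∑ m, ∑ c, (if ftilde c = i then p m * W m c else 0))
      = (∑ m, ∑ c, P m c * g i m) * (∑ m, ∑ c, P m c * gt i c) := by
    intro i _; rw [hB, hD]
  rw [Finset.sum_congr rfl hTBD, ← Finset.sum_sub_distrib]
  -- variances
  set V : ℕ → ℝ := fun i => (∑ m, ∑ c, P m c * (g i m) ^ 2)
    - (∑ m, ∑ c, P m c * g i m) ^ 2 with hV
  set Vt : ℕ → ℝ := fun i => (∑ m, ∑ c, P m c * (gt i c) ^ 2)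
    - (∑ m, ∑ c, P m c * gt i c) ^ 2 with hVt
  have hV0 : ∀ i, 0 ≤ V i := fun i => var_nonneg2 P (fun m _ => g i m) hP hP1
  have hVt0 : ∀ i, 0 ≤ Vt i := fun i => var_nonneg2 P (fun _ c => gt i c) hP hP1
  -- sum of variances bounds
  have hVsum : (∑ i ∈ s, V i) ≤ ∑ m, (phat m) ^ 2 / p m := by
    have step1 : ∀ i, V i ≤ ∑ m, ∑ c, P m c * (g i m) ^ 2 := by
      intro i; rw [hV]; simp only
      nlinarith [sq_nonneg (∑ m, ∑ c, P m c * g i m)]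
    calc (∑ i ∈ s, V i) ≤ ∑ i ∈ s, ∑ m, ∑ c, P m c * (g i m) ^ 2 :=
          Finset.sum_le_sum fun i _ => step1 i
      _ = ∑ m, (phat m) ^ 2 / p m := by
          have e1 : ∀ i, (∑ m, ∑ c, P m c * (g i m) ^ 2)
              = ∑ m, if f m = i then (phat m) ^ 2 / p m else 0 := by
            intro i
            refine Finset.sum_congr rfl fun m _ => ?_
            rw [← Finset.sum_mul, hmarg]
            simp only [hg]
            by_cases h : f m = i
            · rw [if_pos h, if_pos h, one_mul]
              have hpm : p m ≠ 0 := (hp m).ne'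
              field_simp
            · rw [if_neg h, if_neg h, zero_mul]
              simp
          simp only [e1]
          rw [Finset.sum_comm]
          refine Finset.sum_congr rfl fun m _ => ?_
          rw [Finset.sum_ite_eq s (f m) (fun _ => (phat m) ^ 2 / p m), if_pos (hfs m)]
  have hVtsum : (∑ i ∈ s, Vt i) ≤ 1 := by
    have step1 : ∀ i, Vt i ≤ ∑ m, ∑ c, P m c * (gt i c) ^ 2 := by
      intro i; rw [hVt]; simp only
      nlinarith [sq_nonneg (∑ m, ∑ c, P m c * gt i c)]
    calc (∑ i ∈ s, Vt i) ≤ ∑ i ∈ s, ∑ m, ∑ c, P m c * (gt i c) ^ 2 :=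
          Finset.sum_le_sum fun i _ => step1 i
      _ ≤ 1 := by
          rw [Finset.sum_comm]
          rw [show (∑ m, ∑ i ∈ s, ∑ c, P m c * (gt i c) ^ 2)
              = ∑ m, ∑ c, ∑ i ∈ s, P m c * (gt i c) ^ 2 from
            Finset.sum_congr rfl fun m _ => Finset.sum_comm]
          rw [← hP1]
          refine Finset.sum_le_sum fun m _ => Finset.sum_le_sum fun c _ => ?_
          have e2 : ∀ i, P m c * (gt i c) ^ 2 = if ftilde c = i then P m c else 0 := by
            intro i; simp only [hgt]
            by_cases h : ftilde c = i
            · rw [if_pos h, if_pos h, one_pow, mul_one]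
            · rw [if_neg h, if_neg h]; ring
          simp only [e2]
          rw [Finset.sum_ite_eq s (ftilde c) (fun _ => P m c)]
          by_cases h : ftilde c ∈ s
          · rw [if_pos h]
          · rw [if_neg h]; exact hP m c
  -- main estimate
  calc |∑ i ∈ s, ((∑ m, ∑ c, P m c * g i m * gt i c)
          - (∑ m, ∑ c, P m c * g i m) * (∑ m, ∑ c, P m c * gt i c))|
      ≤ ∑ i ∈ s, |(∑ m, ∑ c, P m c * g i m * gt i c)
          - (∑ m, ∑ c, P m c * g i m) * (∑ m, ∑ c, P m c * gt i c)| :=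
        Finset.abs_sum_le_sum_abs _ _
    _ ≤ ∑ i ∈ s, maxCorr P * (Real.sqrt (V i) * Real.sqrt (Vt i)) := by
        refine Finset.sum_le_sum fun i _ => ?_
        have h := cov_bound_abs P hP hP1 (g i) (gt i)
        calc |(∑ m, ∑ c, P m c * g i m * gt i c)
              - (∑ m, ∑ c, P m c * g i m) * (∑ m, ∑ c, P m c * gt i c)|
            ≤ maxCorr P * Real.sqrt (V i) * Real.sqrt (Vt i) := h
          _ = maxCorr P * (Real.sqrt (V i) * Real.sqrt (Vt i)) := by ring
    _ = maxCorr P * ∑ i ∈ s, Real.sqrt (V i) * Real.sqrt (Vt i) := by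
        rw [Finset.mul_sum]
    _ ≤ maxCorr P * (Real.sqrt (∑ i ∈ s, V i) * Real.sqrt (∑ i ∈ s, Vt i)) := by
        refine mul_le_mul_of_nonneg_left ?_ hρ
        exact Real.sum_sqrt_mul_sqrt_le s hV0 hVt0
    _ ≤ maxCorr P * Real.sqrt ((∑ m, (phat m) ^ 2 / p m - 1) + 1) := by
        rw [sub_add_cancel]
        refine mul_le_mul_of_nonneg_left ?_ hρ
        calc Real.sqrt (∑ i ∈ s, V i) * Real.sqrt (∑ i ∈ s, Vt i)
            ≤ Real.sqrt (∑ m, (phat m) ^ 2 / p m) * 1 := by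
              refine mul_le_mul (Real.sqrt_le_sqrt hVsum)
                (Real.sqrt_le_one.mpr hVtsum) (Real.sqrt_nonneg _) (Real.sqrt_nonneg _)
          _ = Real.sqrt (∑ m, (phat m) ^ 2 / p m) := mul_one _
end

section
/- One-bit guessing bound: In the setting of two pmfs p_M (strictly positive) and p̂_M on finite ℳ with a common Markov kernel p_{C|M}, joint laws ℙ and ℙ̂, and maximal correlation ρ = ρ_m(M;C) under ℙ, for any f: ℳ → {0,1} and f̃: 𝒞 → {0,1}: ℙ̂{f(M)=f̃(C)} − 1/2 ≤ √( (ρ²/4)(χ²(p̂_M‖p_M)+1) + (1−ρ²)(ℙ̂{f(M)=0} − 1/2)² ). -/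
open BigOperators Finset
open scoped Classical

/- ===== auxiliary lemmas ===== -/

noncomputable def sgnB : Bool → ℝ := fun b => if b then -1 else 1

lemma sgnB_mul_self (b : Bool) : sgnB b * sgnB b = 1 := by cases b <;> norm_num [sgnB]

lemma sgnB_ite (a b : Bool) :
    (if a = b then (1:ℝ) else 0) = (1 + sgnB a * sgnB b) / 2 := by
  cases a <;> cases b <;> norm_num [sgnB]

lemma sgnB_mul_le (b : Bool) {x : ℝ} (hx : 0 ≤ x) : sgnB b * x ≤ x := by
  cases b <;> simp [sgnB] <;> linarith

lemma neg_le_sgnB_mul (b : Bool) {x : ℝ} (hx : 0 ≤ x) : -x ≤ sgnB b * x := by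
  cases b <;> simp [sgnB] <;> linarith

lemma wcs' {α : Type*} (s : Finset α) (q u v : α → ℝ) (hq : ∀ a ∈ s, 0 ≤ q a) :
    (∑ a ∈ s, q a * (u a * v a)) ^ 2 ≤
      (∑ a ∈ s, q a * u a ^ 2) * (∑ a ∈ s, q a * v a ^ 2) := by
  have h := Finset.sum_mul_sq_le_sq_mul_sq s (fun a => Real.sqrt (q a) * u a)
      (fun a => Real.sqrt (q a) * v a)
  have e1 : ∀ a ∈ s, (Real.sqrt (q a) * u a) * (Real.sqrt (q a) * v a) = q a * (u a * v a) := by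
    intro a ha
    calc (Real.sqrt (q a) * u a) * (Real.sqrt (q a) * v a)
        = (Real.sqrt (q a) * Real.sqrt (q a)) * (u a * v a) := by ring
      _ = q a * (u a * v a) := by rw [Real.mul_self_sqrt (hq a ha)]
  have e2 : ∀ a ∈ s, (Real.sqrt (q a) * u a) ^ 2 = q a * u a ^ 2 := by
    intro a ha; rw [mul_pow, Real.sq_sqrt (hq a ha)]
  have e3 : ∀ a ∈ s, (Real.sqrt (q a) * v a) ^ 2 = q a * v a ^ 2 := by
    intro a ha; rw [mul_pow, Real.sq_sqrt (hq a ha)]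
  rw [Finset.sum_congr rfl e1, Finset.sum_congr rfl e2, Finset.sum_congr rfl e3] at h
  exact h

lemma expandcross {α : Type*} (s : Finset α) (q u v : α → ℝ) (a b c d : ℝ) :
    ∑ x ∈ s, q x * (((u x - a) * c) * ((v x - b) * d)) =
      ((∑ x ∈ s, q x * (u x * v x)) - a * (∑ x ∈ s, q x * v x)
        - b * (∑ x ∈ s, q x * u x) + a * b * ∑ x ∈ s, q x) * (c * d) := by
  calc ∑ x ∈ s, q x * (((u x - a) * c) * ((v x - b) * d))
      = ∑ x ∈ s, (q x * (u x * v x) * (c * d) - q x * v x * (a * (c * d))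
          - q x * u x * (b * (c * d)) + q x * (a * b * (c * d))) :=
        Finset.sum_congr rfl (fun x _ => by ring)
    _ = _ := by
        rw [Finset.sum_add_distrib, Finset.sum_sub_distrib, Finset.sum_sub_distrib,
          ← Finset.sum_mul, ← Finset.sum_mul, ← Finset.sum_mul, ← Finset.sum_mul]
        ring

lemma expandsq {α : Type*} (s : Finset α) (q u : α → ℝ) (a c : ℝ) :
    ∑ x ∈ s, q x * ((u x - a) * c) ^ 2 =
      ((∑ x ∈ s, q x * (u x * u x)) - 2 * a * (∑ x ∈ s, q x * u x)
        + a ^ 2 * ∑ x ∈ s, q x) * c ^ 2 := by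
  have h := expandcross s q u u a a c c
  calc ∑ x ∈ s, q x * ((u x - a) * c) ^ 2
      = ∑ x ∈ s, q x * (((u x - a) * c) * ((u x - a) * c)) :=
        Finset.sum_congr rfl (fun x _ => by ring)
    _ = _ := by rw [h]; ring

lemma expandlin {α : Type*} (s : Finset α) (q u : α → ℝ) (a c : ℝ) :
    ∑ x ∈ s, q x * ((u x - a) * c) =
      ((∑ x ∈ s, q x * u x) - a * ∑ x ∈ s, q x) * c := by
  calc ∑ x ∈ s, q x * ((u x - a) * c)
      = ∑ x ∈ s, (q x * u x * c - q x * (a * c)) :=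
        Finset.sum_congr rfl (fun x _ => by ring)
    _ = _ := by
        rw [Finset.sum_sub_distrib, ← Finset.sum_mul, ← Finset.sum_mul]; ring

theorem stmt16 {M C : Type*} [Fintype M] [Fintype C]
    (p phat : M → ℝ) (hp : ∀ m, 0 < p m) (hp1 : ∑ m, p m = 1)
    (hphat : ∀ m, 0 ≤ phat m) (hphat1 : ∑ m, phat m = 1)
    (W : M → C → ℝ) (hW : ∀ m c, 0 ≤ W m c) (hW1 : ∀ m, ∑ c, W m c = 1)
    (ρ : ℝ) (hρ : ρ = maxCorr (fun m c => p m * W m c))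
    (f : M → Bool) (ftilde : C → Bool) :
    (∑ m, ∑ c, phat m * W m c * (if f m = ftilde c then 1 else 0)) - 1 / 2 ≤
    Real.sqrt (ρ ^ 2 / 4 * ((∑ m, (phat m) ^ 2 / p m - 1) + 1) +
      (1 - ρ ^ 2) * ((∑ m, if f m = false then phat m else 0) - 1 / 2) ^ 2) := by
  classical
  obtain ⟨g, hgdef⟩ : ∃ g : M → ℝ, g = fun m => sgnB (f m) * phat m / p m := ⟨_, rfl⟩
  obtain ⟨Q, hQdef⟩ : ∃ Q : M × C → ℝ, Q = fun x => p x.1 * W x.1 x.2 := ⟨_, rfl⟩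
  have hQ0 : ∀ x ∈ (univ : Finset (M × C)), 0 ≤ Q x := by
    intro x _; rw [hQdef]; exact mul_nonneg (hp x.1).le (hW x.1 x.2)
  obtain ⟨A, hAdef⟩ : ∃ A : ℝ, A = ∑ x : M × C, Q x * (g x.1 * sgnB (ftilde x.2)) := ⟨_, rfl⟩
  obtain ⟨μ, hμdef⟩ : ∃ μ : ℝ, μ = ∑ m, sgnB (f m) * phat m := ⟨_, rfl⟩
  obtain ⟨S, hSdef⟩ : ∃ S : ℝ, S = ∑ m, phat m ^ 2 / p m := ⟨_, rfl⟩
  obtain ⟨t, htdef⟩ : ∃ t : ℝ, t = ∑ x : M × C, Q x * sgnB (ftilde x.2) := ⟨_, rfl⟩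
  -- collapse of sums over the product for functions of the first coordinate
  have hcolA : ∀ h : M → ℝ, ∑ x : M × C, Q x * h x.1 = ∑ m, p m * h m := by
    intro h
    rw [Fintype.sum_prod_type]
    refine Finset.sum_congr rfl fun m _ => ?_
    calc ∑ c, Q (m, c) * h m = (∑ c, W m c) * (p m * h m) := by
          rw [Finset.sum_mul]
          exact Finset.sum_congr rfl fun c _ => by simp only [hQdef]; ring
      _ = p m * h m := by rw [hW1 m, one_mul]
  -- basic expectations
  have hpg : ∑ m, p m * g m = μ := by
    rw [hμdef]
    refine Finset.sum_congr rfl fun m _ => ?_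
    have h2 := (hp m).ne'
    rw [hgdef]
    field_simp
  have hpg2 : ∑ m, p m * (g m * g m) = S := by
    rw [hSdef]
    refine Finset.sum_congr rfl fun m _ => ?_
    have h2 := (hp m).ne'
    rw [hgdef]
    cases hb : f m <;> simp only [sgnB, hb, if_true, if_false, Bool.false_eq_true] <;>
      field_simp <;> ring
  have E1 : ∑ x : M × C, Q x * g x.1 = μ := (hcolA g).trans hpg
  have E2 : ∑ x : M × C, Q x * (g x.1 * g x.1) = S := (hcolA (fun m => g m * g m)).trans hpg2
  have E6 : ∑ x : M × C, Q x = 1 := by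
    have h1 : ∑ x : M × C, Q x = ∑ x : M × C, Q x * ((fun _ => (1:ℝ)) x.1) := by simp
    rw [h1, hcolA (fun _ => (1:ℝ))]
    simp [hp1]
  have E4 : ∑ x : M × C, Q x * (sgnB (ftilde x.2) * sgnB (ftilde x.2)) = 1 := by
    rw [← E6]
    exact Finset.sum_congr rfl fun x _ => by rw [sgnB_mul_self, mul_one]
  -- rewrite the goal quantities
  have hPW : ∑ m, ∑ c, phat m * W m c = 1 := by
    have h1 : ∀ m, ∑ c, phat m * W m c = phat m := fun m => by
      rw [← Finset.mul_sum, hW1 m, mul_one]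
    rw [Finset.sum_congr rfl fun m _ => h1 m, hphat1]
  have hA' : A = ∑ m, ∑ c, phat m * W m c * (sgnB (f m) * sgnB (ftilde c)) := by
    rw [hAdef, Fintype.sum_prod_type]
    refine Finset.sum_congr rfl fun m _ => Finset.sum_congr rfl fun c _ => ?_
    have h2 := (hp m).ne'
    rw [hQdef, hgdef]
    field_simp
  have hLHS : (∑ m, ∑ c, phat m * W m c * (if f m = ftilde c then 1 else 0))
      = 1 / 2 + A / 2 := by
    have h2 : (∑ m, ∑ c, phat m * W m c * (if f m = ftilde c then 1 else 0))
        = ∑ m, ∑ c, (phat m * W m c * (1/2)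
            + phat m * W m c * (sgnB (f m) * sgnB (ftilde c)) * (1/2)) := by
      refine Finset.sum_congr rfl fun m _ => Finset.sum_congr rfl fun c _ => ?_
      rw [sgnB_ite (f m) (ftilde c)]; ring
    rw [h2]
    simp only [Finset.sum_add_distrib, ← Finset.sum_mul]
    rw [hPW, ← hA']
    ring
  have hFF : (∑ m, if f m = false then phat m else 0) = 1 / 2 + μ / 2 := by
    have h2 : (∑ m, if f m = false then phat m else 0)
        = ∑ m, (phat m * (1/2) + sgnB (f m) * phat m * (1/2)) := by
      refine Finset.sum_congr rfl fun m _ => ?_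
      cases hb : f m <;> simp [sgnB, hb] <;> ring
    rw [h2]
    simp only [Finset.sum_add_distrib, ← Finset.sum_mul]
    rw [hphat1, ← hμdef]
    ring
  -- bounds
  have hμub : μ ≤ 1 := by
    rw [hμdef, ← hphat1]
    exact Finset.sum_le_sum fun m _ => sgnB_mul_le (f m) (hphat m)
  have hμlb : -1 ≤ μ := by
    have h1 : ∑ m, -phat m = -1 := by rw [Finset.sum_neg_distrib, hphat1]
    rw [hμdef, ← h1]
    exact Finset.sum_le_sum fun m _ => neg_le_sgnB_mul (f m) (hphat m)
  have hμ2 : μ ^ 2 ≤ 1 := by nlinarith only [hμub, hμlb]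
  have hS1 : 1 ≤ S := by
    have h := wcs' univ p (fun m => phat m / p m) (fun _ => (1:ℝ))
      (fun m _ => (hp m).le)
    have e1 : ∑ m, p m * (phat m / p m * 1) = 1 := by
      have h4 : ∀ m ∈ (univ : Finset M), p m * (phat m / p m * 1) = phat m := by
        intro m _
        have h2 := (hp m).ne'
        field_simp
      rw [Finset.sum_congr rfl h4, hphat1]
    have e2 : ∑ m, p m * (phat m / p m) ^ 2 = S := by
      rw [hSdef]
      refine Finset.sum_congr rfl fun m _ => ?_
      have h2 := (hp m).ne'
      field_simp
    have e3 : ∑ m, p m * (1:ℝ) ^ 2 = 1 := by simp [hp1]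
    rw [e1, e2, e3, mul_one] at h
    nlinarith only [h]
  have htub : t ≤ 1 := by
    rw [htdef, ← E6]
    refine Finset.sum_le_sum fun x hx => ?_
    have := hQ0 x hx
    calc Q x * sgnB (ftilde x.2) = sgnB (ftilde x.2) * Q x := by ring
      _ ≤ Q x := sgnB_mul_le _ this
  have htlb : -1 ≤ t := by
    have h1 : ∑ x : M × C, -Q x = -1 := by rw [Finset.sum_neg_distrib, E6]
    rw [htdef, ← h1]
    refine Finset.sum_le_sum fun x hx => ?_
    have := hQ0 x hx
    calc -Q x ≤ sgnB (ftilde x.2) * Q x := neg_le_sgnB_mul _ this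
      _ = Q x * sgnB (ftilde x.2) := by ring
  have ht2 : t ^ 2 ≤ 1 := by nlinarith only [htub, htlb]
  have hA2S : A ^ 2 ≤ S := by
    have h := wcs' univ Q (fun x => g x.1) (fun x => sgnB (ftilde x.2)) hQ0
    have e2 : ∑ x : M × C, Q x * (g x.1) ^ 2 = S := by
      rw [← E2]; exact Finset.sum_congr rfl fun x _ => by ring
    have e4 : ∑ x : M × C, Q x * (sgnB (ftilde x.2)) ^ 2 = 1 := by
      rw [← E4]; exact Finset.sum_congr rfl fun x _ => by ring
    rw [e2, e4, mul_one, ← hAdef] at h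
    exact h
  -- centered second moments
  have ecent1 : ∑ x : M × C, Q x * ((g x.1 - μ) * (1:ℝ)) ^ 2 = S - μ ^ 2 := by
    have h : ∑ x : M × C, Q x * ((g x.1 - μ) * (1:ℝ)) ^ 2
        = ((∑ x : M × C, Q x * (g x.1 * g x.1)) - 2 * μ * (∑ x : M × C, Q x * g x.1)
            + μ ^ 2 * ∑ x : M × C, Q x) * (1:ℝ) ^ 2 :=
      expandsq univ Q (fun x => g x.1) μ 1
    rw [h, E2, E1, E6]; ring
  have ecent2 : ∑ x : M × C, Q x * ((sgnB (ftilde x.2) - t) * (1:ℝ)) ^ 2 = 1 - t ^ 2 := by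
    have h : ∑ x : M × C, Q x * ((sgnB (ftilde x.2) - t) * (1:ℝ)) ^ 2
        = ((∑ x : M × C, Q x * (sgnB (ftilde x.2) * sgnB (ftilde x.2)))
            - 2 * t * (∑ x : M × C, Q x * sgnB (ftilde x.2))
            + t ^ 2 * ∑ x : M × C, Q x) * (1:ℝ) ^ 2 :=
      expandsq univ Q (fun x => sgnB (ftilde x.2)) t 1
    rw [h, E4, ← htdef, E6]; ring
  have ecross : ∑ x : M × C, Q x * (((g x.1 - μ) * (1:ℝ)) * ((sgnB (ftilde x.2) - t) * (1:ℝ)))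
      = A - μ * t := by
    have h : ∑ x : M × C, Q x * (((g x.1 - μ) * (1:ℝ)) * ((sgnB (ftilde x.2) - t) * (1:ℝ)))
        = ((∑ x : M × C, Q x * (g x.1 * sgnB (ftilde x.2)))
            - μ * (∑ x : M × C, Q x * sgnB (ftilde x.2))
            - t * (∑ x : M × C, Q x * g x.1)
            + μ * t * ∑ x : M × C, Q x) * ((1:ℝ) * 1) :=
      expandcross univ Q (fun x => g x.1) (fun x => sgnB (ftilde x.2)) μ t 1 1
    rw [h, ← hAdef, E1, ← htdef, E6]; ring
  have hcs : (A - μ * t) ^ 2 ≤ (S - μ ^ 2) * (1 - t ^ 2) := by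
    have h := wcs' univ Q (fun x => (g x.1 - μ) * (1:ℝ))
      (fun x => (sgnB (ftilde x.2) - t) * (1:ℝ)) hQ0
    rw [ecross, ecent1, ecent2] at h
    exact h
  -- key inequality
  have key : A ^ 2 ≤ ρ ^ 2 * S + (1 - ρ ^ 2) * μ ^ 2 := by
    rcases le_or_gt (A ^ 2) (μ ^ 2) with hcase | hcase
    · have h1 : 0 ≤ ρ ^ 2 * (S - μ ^ 2) :=
        mul_nonneg (sq_nonneg ρ) (by linarith only [hS1, hμ2])
      nlinarith only [hcase, h1]
    · have hSμ : 0 < S - μ ^ 2 := by linarith only [hcase, hA2S]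
      have htt : 0 < 1 - t ^ 2 := by
        rcases lt_or_ge (t ^ 2) 1 with hcon | hcon
        · linarith only [hcon]
        · exfalso
          have h1 : (1:ℝ) - t ^ 2 = 0 := by linarith only [hcon, ht2]
          have h2 : (A - μ * t) ^ 2 ≤ 0 := by
            calc (A - μ * t) ^ 2 ≤ (S - μ ^ 2) * (1 - t ^ 2) := hcs
              _ = 0 := by rw [h1]; ring
          have h3 : A - μ * t = 0 :=
            sq_eq_zero_iff.mp (le_antisymm h2 (sq_nonneg _))
          have h4 : t ^ 2 = 1 := by linarith only [hcon, ht2]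
          have h5 : A = μ * t := by linarith only [h3]
          have h6 : A ^ 2 = μ ^ 2 := by rw [h5, mul_pow, h4, mul_one]
          linarith only [hcase, h6]
      -- construct the test functions
      obtain ⟨a, hadef⟩ : ∃ a : ℝ, a = Real.sqrt (S - μ ^ 2) := ⟨_, rfl⟩
      obtain ⟨b, hbdef⟩ : ∃ b : ℝ, b = Real.sqrt (1 - t ^ 2) := ⟨_, rfl⟩
      have ha0 : 0 < a := hadef ▸ Real.sqrt_pos.mpr hSμ
      have hb0 : 0 < b := hbdef ▸ Real.sqrt_pos.mpr htt
      have ha2 : a ^ 2 = S - μ ^ 2 := by rw [hadef]; exact Real.sq_sqrt hSμ.le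
      have hb2 : b ^ 2 = 1 - t ^ 2 := by rw [hbdef]; exact Real.sq_sqrt htt.le
      obtain ⟨F0, hF0def⟩ : ∃ F0 : M → ℝ, F0 = fun m => (g m - μ) * (1 / a) := ⟨_, rfl⟩
      obtain ⟨G0, hG0def⟩ : ∃ G0 : C → ℝ, G0 = fun c => (sgnB (ftilde c) - t) * (1 / b) := ⟨_, rfl⟩
      obtain ⟨r, hrdef⟩ : ∃ r : ℝ, r = (A - μ * t) * (1 / (a * b)) := ⟨_, rfl⟩
      obtain ⟨ss, hssdef⟩ : ∃ ss : Set ℝ, ss = {r : ℝ | ∃ f₀ : M → ℝ, ∃ g₀ : C → ℝ,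
        (∑ m, ∑ c, (fun m c => p m * W m c) m c * f₀ m) = 0 ∧
        (∑ m, ∑ c, (fun m c => p m * W m c) m c * g₀ c) = 0 ∧
        (∑ m, ∑ c, (fun m c => p m * W m c) m c * (f₀ m) ^ 2) = 1 ∧
        (∑ m, ∑ c, (fun m c => p m * W m c) m c * (g₀ c) ^ 2) = 1 ∧
        r = ∑ m, ∑ c, (fun m c => p m * W m c) m c * f₀ m * g₀ c} := ⟨_, rfl⟩
      have hρss : ρ = sSup ss := by rw [hssdef]; exact hρ
      -- boundedness
      have hbdd : BddAbove ss := by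
        rw [hssdef]
        refine ⟨1, ?_⟩
        rintro x ⟨f₀, g₀, c1, c2, c3, c4, c5⟩
        have hx : x = ∑ y : M × C, Q y * (f₀ y.1 * g₀ y.2) := by
          rw [c5, Fintype.sum_prod_type]
          exact Finset.sum_congr rfl fun m _ => Finset.sum_congr rfl fun c _ => by
            rw [hQdef]; ring
        have hc3 : ∑ y : M × C, Q y * (f₀ y.1) ^ 2 = 1 := by
          rw [← c3, Fintype.sum_prod_type]
          exact Finset.sum_congr rfl fun m _ => Finset.sum_congr rfl fun c _ => by
            rw [hQdef]
        have hc4 : ∑ y : M × C, Q y * (g₀ y.2) ^ 2 = 1 := by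
          rw [← c4, Fintype.sum_prod_type]
          exact Finset.sum_congr rfl fun m _ => Finset.sum_congr rfl fun c _ => by
            rw [hQdef]
        have h := wcs' univ Q (fun y => f₀ y.1) (fun y => g₀ y.2) hQ0
        rw [hc3, hc4, mul_one, ← hx] at h
        nlinarith only [h, sq_nonneg (x - 1)]
      -- membership conditions
      have cond1 : (∑ m, ∑ c, (fun m c => p m * W m c) m c * F0 m) = 0 := by
        have h1 : (∑ m, ∑ c, (fun m c => p m * W m c) m c * F0 m)
            = ∑ x : M × C, Q x * F0 x.1 := by
          rw [Fintype.sum_prod_type]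
          exact Finset.sum_congr rfl fun m _ => Finset.sum_congr rfl fun c _ => by
            rw [hQdef]
        rw [h1, hcolA F0]
        have h2 : ∑ m, p m * F0 m = ((∑ m, p m * g m) - μ * ∑ m, p m) * (1/a) := by
          rw [hF0def]; exact expandlin univ p g μ (1/a)
        rw [h2, hpg, hp1]
        ring
      have cond2 : (∑ m, ∑ c, (fun m c => p m * W m c) m c * G0 c) = 0 := by
        have h1 : (∑ m, ∑ c, (fun m c => p m * W m c) m c * G0 c)
            = ∑ x : M × C, Q x * ((sgnB (ftilde x.2) - t) * (1/b)) := by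
          rw [Fintype.sum_prod_type]
          exact Finset.sum_congr rfl fun m _ => Finset.sum_congr rfl fun c _ => by
            rw [hQdef, hG0def]
        have h2 : ∑ x : M × C, Q x * ((sgnB (ftilde x.2) - t) * (1/b))
            = ((∑ x : M × C, Q x * sgnB (ftilde x.2)) - t * ∑ x : M × C, Q x) * (1/b) :=
          expandlin univ Q (fun x => sgnB (ftilde x.2)) t (1/b)
        rw [h1, h2, ← htdef, E6]
        ring
      have cond3 : (∑ m, ∑ c, (fun m c => p m * W m c) m c * (F0 m) ^ 2) = 1 := by
        have h1 : (∑ m, ∑ c, (fun m c => p m * W m c) m c * (F0 m) ^ 2)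
            = ∑ x : M × C, Q x * ((g x.1 - μ) * (1/a)) ^ 2 := by
          rw [Fintype.sum_prod_type]
          exact Finset.sum_congr rfl fun m _ => Finset.sum_congr rfl fun c _ => by
            rw [hQdef, hF0def]
        have h2 : ∑ x : M × C, Q x * ((g x.1 - μ) * (1/a)) ^ 2
            = ((∑ x : M × C, Q x * (g x.1 * g x.1)) - 2 * μ * (∑ x : M × C, Q x * g x.1)
                + μ ^ 2 * ∑ x : M × C, Q x) * (1/a) ^ 2 :=
          expandsq univ Q (fun x => g x.1) μ (1/a)
        rw [h1, h2, E2, E1, E6]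
        have hane := ha0.ne'
        rw [div_pow, one_pow, ha2]
        field_simp
        ring
      have cond4 : (∑ m, ∑ c, (fun m c => p m * W m c) m c * (G0 c) ^ 2) = 1 := by
        have h1 : (∑ m, ∑ c, (fun m c => p m * W m c) m c * (G0 c) ^ 2)
            = ∑ x : M × C, Q x * ((sgnB (ftilde x.2) - t) * (1/b)) ^ 2 := by
          rw [Fintype.sum_prod_type]
          exact Finset.sum_congr rfl fun m _ => Finset.sum_congr rfl fun c _ => by
            rw [hQdef, hG0def]
        have h2 : ∑ x : M × C, Q x * ((sgnB (ftilde x.2) - t) * (1/b)) ^ 2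
            = ((∑ x : M × C, Q x * (sgnB (ftilde x.2) * sgnB (ftilde x.2)))
                - 2 * t * (∑ x : M × C, Q x * sgnB (ftilde x.2))
                + t ^ 2 * ∑ x : M × C, Q x) * (1/b) ^ 2 :=
          expandsq univ Q (fun x => sgnB (ftilde x.2)) t (1/b)
        rw [h1, h2, E4, ← htdef, E6]
        have hbne := hb0.ne'
        rw [div_pow, one_pow, hb2]
        field_simp
        ring
      have cond5 : r = ∑ m, ∑ c, (fun m c => p m * W m c) m c * F0 m * G0 c := by
        have h1 : (∑ m, ∑ c, (fun m c => p m * W m c) m c * F0 m * G0 c)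
            = ∑ x : M × C, Q x * (((g x.1 - μ) * (1/a)) * ((sgnB (ftilde x.2) - t) * (1/b))) := by
          rw [Fintype.sum_prod_type]
          exact Finset.sum_congr rfl fun m _ => Finset.sum_congr rfl fun c _ => by
            rw [hQdef, hF0def, hG0def]; ring
        have h2 : ∑ x : M × C, Q x * (((g x.1 - μ) * (1/a)) * ((sgnB (ftilde x.2) - t) * (1/b)))
            = ((∑ x : M × C, Q x * (g x.1 * sgnB (ftilde x.2)))
                - μ * (∑ x : M × C, Q x * sgnB (ftilde x.2))
                - t * (∑ x : M × C, Q x * g x.1)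
                + μ * t * ∑ x : M × C, Q x) * ((1/a) * (1/b)) :=
          expandcross univ Q (fun x => g x.1) (fun x => sgnB (ftilde x.2)) μ t (1/a) (1/b)
        rw [h1, h2, ← hAdef, E1, ← htdef, E6, hrdef]
        have hane := ha0.ne'
        have hbne := hb0.ne'
        field_simp
        ring
      have hmem : r ∈ ss := by
        rw [hssdef]; exact ⟨F0, G0, cond1, cond2, cond3, cond4, cond5⟩
      have hmem' : -r ∈ ss := by
        rw [hssdef]
        refine ⟨fun m => -F0 m, G0, ?_, cond2, ?_, cond4, ?_⟩
        · have h1 : (∑ m, ∑ c, (fun m c => p m * W m c) m c * (-F0 m))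
              = -(∑ m, ∑ c, (fun m c => p m * W m c) m c * F0 m) := by
            rw [← Finset.sum_neg_distrib]
            exact Finset.sum_congr rfl fun m _ => by
              rw [← Finset.sum_neg_distrib]
              exact Finset.sum_congr rfl fun c _ => by ring
          rw [h1, cond1, neg_zero]
        · have h1 : (∑ m, ∑ c, (fun m c => p m * W m c) m c * (-F0 m) ^ 2)
              = ∑ m, ∑ c, (fun m c => p m * W m c) m c * (F0 m) ^ 2 :=
            Finset.sum_congr rfl fun m _ => Finset.sum_congr rfl fun c _ => by ring
          rw [h1, cond3]
        · have h1 : (∑ m, ∑ c, (fun m c => p m * W m c) m c * (-F0 m) * G0 c)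
              = -(∑ m, ∑ c, (fun m c => p m * W m c) m c * F0 m * G0 c) := by
            rw [← Finset.sum_neg_distrib]
            exact Finset.sum_congr rfl fun m _ => by
              rw [← Finset.sum_neg_distrib]
              exact Finset.sum_congr rfl fun c _ => by ring
          rw [h1, ← cond5]
      have hr1 : r ≤ ρ := by rw [hρss]; exact le_csSup hbdd hmem
      have hr2 : -r ≤ ρ := by rw [hρss]; exact le_csSup hbdd hmem'
      have hr2' : r ^ 2 ≤ ρ ^ 2 := sq_le_sq' (by linarith) hr1
      have hAmt : (A - μ * t) ^ 2 = r ^ 2 * (a * b) ^ 2 := by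
        rw [hrdef]
        have hane := ha0.ne'
        have hbne := hb0.ne'
        field_simp
      have habk : (A - μ * t) ^ 2 ≤ ρ ^ 2 * ((S - μ ^ 2) * (1 - t ^ 2)) := by
        calc (A - μ * t) ^ 2 = r ^ 2 * (a * b) ^ 2 := hAmt
          _ ≤ ρ ^ 2 * (a * b) ^ 2 := mul_le_mul_of_nonneg_right hr2' (sq_nonneg _)
          _ = ρ ^ 2 * ((S - μ ^ 2) * (1 - t ^ 2)) := by rw [mul_pow, ha2, hb2]
      have h5 : (A ^ 2 - μ ^ 2) * (1 - t ^ 2) ≤ (ρ ^ 2 * (S - μ ^ 2)) * (1 - t ^ 2) := by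
        nlinarith only [habk, sq_nonneg (A * t - μ)]
      have hdiv : A ^ 2 - μ ^ 2 ≤ ρ ^ 2 * (S - μ ^ 2) := le_of_mul_le_mul_right h5 htt
      nlinarith only [hdiv]
  -- conclude
  rw [hLHS, hFF, ← hSdef]
  have hinner : ρ ^ 2 / 4 * ((S - 1) + 1)
      + (1 - ρ ^ 2) * ((1 / 2 + μ / 2) - 1 / 2) ^ 2
      = (ρ ^ 2 * S + (1 - ρ ^ 2) * μ ^ 2) / 4 := by ring
  rw [hinner]
  rcases le_or_gt A 0 with hA0 | hA0
  · have := Real.sqrt_nonneg ((ρ ^ 2 * S + (1 - ρ ^ 2) * μ ^ 2) / 4)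
    linarith
  · have hx0 : (0:ℝ) ≤ 1 / 2 + A / 2 - 1 / 2 := by linarith
    have hy0 : (0:ℝ) ≤ (ρ ^ 2 * S + (1 - ρ ^ 2) * μ ^ 2) / 4 := by
      linarith only [key, sq_nonneg A]
    exact (Real.le_sqrt hx0 hy0).mpr (by nlinarith only [key])
end

section
/- There exists a cipher whose maximal correlation equals 1 even though I(M;C) → 0 as n → ∞: with ℳ = 𝒞 = 𝒦 = [0:2ⁿ−1], K uniform, M uniform and independent of K, and E(k,m) = m + k mod (2ⁿ−1) if m < 2ⁿ−1 and E(k, 2ⁿ−1) = 2ⁿ−1, the ciphertext C = E(K,M) satisfies ρ_m(M;C) = 1 while I(M;C) = 2⁻ⁿ(n + 2 − 2^{−(n−1)}). -/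
open BigOperators Finset
open scoped Classical

/-- The cipher `E(k,m) = m + k mod (2^n − 1)` if `m < 2^n − 1`, and
`E(k, 2^n − 1) = 2^n − 1`. -/
def modEnc (n : ℕ) (k m : Fin (2 ^ n)) : Fin (2 ^ n) :=
  if hm : (m : ℕ) < 2 ^ n - 1 then
    ⟨((m : ℕ) + (k : ℕ)) % (2 ^ n - 1), by
      have h1 : 0 < 2 ^ n - 1 := by omega
      exact lt_of_lt_of_le (Nat.mod_lt _ h1) (Nat.sub_le _ _)⟩
  else m

section
variable {n : ℕ}

lemma two_le_pow' (hn : 1 ≤ n) : 2 ≤ 2 ^ n := by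
  calc 2 = 2 ^ 1 := rfl
  _ ≤ 2 ^ n := Nat.pow_le_pow_right (by norm_num) hn

lemma cnt_eq (hn : 1 ≤ n) (m c : Fin (2 ^ n)) :
    (univ.filter fun k : Fin (2 ^ n) => modEnc n k m = c).card =
      if (m : ℕ) = 2 ^ n - 1 then (if c = m then 2 ^ n else 0)
      else if (c : ℕ) = 2 ^ n - 1 then 0 else if c = m then 2 else 1 := by
  have hN := two_le_pow' hn
  set L := 2 ^ n - 1 with hLdef
  have hL : 1 ≤ L := by omega
  have hLN : L < 2 ^ n := by omega
  by_cases hm : (m : ℕ) = L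
  · have hmod : ∀ k : Fin (2 ^ n), modEnc n k m = m := by
      intro k; unfold modEnc; rw [dif_neg]; omega
    simp only [hmod, if_pos hm]
    by_cases hc : c = m
    · subst hc; simp
    · rw [if_neg hc]
      rw [Finset.card_eq_zero, Finset.filter_eq_empty_iff]
      intro k _; exact fun h => hc h.symm
  · have hm' : (m : ℕ) < L := by have := m.isLt; omega
    have hmod : ∀ k : Fin (2 ^ n), modEnc n k m =
        ⟨((m : ℕ) + (k : ℕ)) % L, lt_of_lt_of_le (Nat.mod_lt _ (by omega)) (Nat.sub_le _ _)⟩ := by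
      intro k; unfold modEnc; rw [dif_pos hm']
    rw [if_neg hm]
    by_cases hc : (c : ℕ) = L
    · rw [if_pos hc, Finset.card_eq_zero, Finset.filter_eq_empty_iff]
      intro k _ h
      rw [hmod] at h
      have := Fin.val_eq_of_eq h
      simp at this
      have : ((m : ℕ) + k) % L < L := Nat.mod_lt _ (by omega)
      omega
    · rw [if_neg hc]
      have hc' : (c : ℕ) < L := by have := c.isLt; omega
      set k0 : ℕ := ((c : ℕ) + (L - (m : ℕ))) % L with hk0def
      have hk0L : k0 < L := Nat.mod_lt _ (by omega)
      have hk0 : ((m : ℕ) + k0) % L = (c : ℕ) := by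
        have he : (m : ℕ) + ((c : ℕ) + (L - (m : ℕ))) = (c : ℕ) + L := by omega
        rw [hk0def, Nat.add_mod_mod, he, Nat.add_mod_right, Nat.mod_eq_of_lt hc']
      -- characterize membership
      have hmem : ∀ k : Fin (2 ^ n), modEnc n k m = c ↔
          (k = (⟨k0, lt_trans hk0L hLN⟩ : Fin (2 ^ n)) ∨
            ((c : ℕ) = (m : ℕ) ∧ k = (⟨L, hLN⟩ : Fin (2 ^ n)))) := by
        intro k
        rw [hmod, Fin.ext_iff, Fin.ext_iff, Fin.ext_iff]
        simp only
        constructor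
        · intro h
          rcases Nat.lt_or_ge (k : ℕ) L with hk | hk
          · left
            have hmq : ((m : ℕ) + (k : ℕ)) % L = ((m : ℕ) + k0) % L := by rw [h, hk0]
            have : (k : ℕ) ≡ k0 [MOD L] := Nat.ModEq.add_left_cancel' (m : ℕ) hmq
            have := this.eq_of_lt_of_lt hk hk0L
            exact this
          · right
            have hkL : (k : ℕ) = L := by have := k.isLt; omega
            constructor
            · rw [← h, hkL, Nat.add_mod_right, Nat.mod_eq_of_lt hm']
            · exact hkL
        · rintro (h | ⟨hcm, h⟩)
          · rw [h]; exact hk0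
          · rw [h, Nat.add_mod_right, Nat.mod_eq_of_lt hm', hcm]
      by_cases hcm : c = m
      · rw [if_pos hcm]
        have hfe : (univ.filter fun k : Fin (2 ^ n) => modEnc n k m = c) =
            {(⟨k0, lt_trans hk0L hLN⟩ : Fin (2 ^ n)), (⟨L, hLN⟩ : Fin (2 ^ n))} := by
          ext k
          rw [Finset.mem_filter, Finset.mem_insert, Finset.mem_singleton]
          rw [hmem k, hcm]
          simp
        rw [hfe, Finset.card_insert_of_notMem, Finset.card_singleton]
        rw [Finset.mem_singleton]
        intro h
        have := Fin.val_eq_of_eq h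
        simp only at this
        omega
      · rw [if_neg hcm]
        have hcm' : ¬ ((c : ℕ) = (m : ℕ)) := fun h => hcm (Fin.ext h)
        have hfe : (univ.filter fun k : Fin (2 ^ n) => modEnc n k m = c) =
            {(⟨k0, lt_trans hk0L hLN⟩ : Fin (2 ^ n))} := by
          ext k
          rw [Finset.mem_filter, Finset.mem_singleton, hmem k]
          simp [hcm']
        rw [hfe, Finset.card_singleton]


noncomputable def Pj (n : ℕ) (m c : Fin (2 ^ n)) : ℝ :=
  ((2 ^ n : ℝ))⁻¹ * ((2 ^ n : ℝ))⁻¹ *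
    ((univ.filter fun k : Fin (2 ^ n) => modEnc n k m = c).card : ℝ)

lemma sum_aux (a b : Fin (2 ^ n)) (hab : b ≠ a) :
    (∑ c : Fin (2 ^ n), if c = a then (0:ℝ) else if c = b then 2 else 1) = 2 ^ n := by
  have h1 : ∀ c : Fin (2 ^ n), (if c = a then (0:ℝ) else if c = b then 2 else 1) =
      (if c = b then (1:ℝ) else 0) + (1 - (if c = a then (1:ℝ) else 0)) := by
    intro c
    by_cases h1 : c = a
    · have hb : c ≠ b := by rw [h1]; exact fun h => hab h.symm
      simp [h1, hb, Ne.symm hab]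
    · by_cases h2 : c = b <;> simp [h1, h2, hab] <;> norm_num
  rw [Finset.sum_congr rfl (fun c _ => h1 c)]
  rw [Finset.sum_add_distrib, Finset.sum_sub_distrib]
  rw [Finset.sum_ite_eq' univ b (fun _ => (1:ℝ)), Finset.sum_ite_eq' univ a (fun _ => (1:ℝ))]
  simp [Finset.card_univ]


lemma row_sum (hn : 1 ≤ n) (m : Fin (2 ^ n)) : ∑ c, Pj n m c = ((2 ^ n : ℝ))⁻¹ := by
  have hN := two_le_pow' hn
  have hNR : ((2 : ℝ) ^ n) ≠ 0 := by positivity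
  have hNL : 2 ^ n - 1 < 2 ^ n := by omega
  set mL : Fin (2 ^ n) := ⟨2 ^ n - 1, hNL⟩ with hmL
  by_cases hm : (m : ℕ) = 2 ^ n - 1
  · have hpt : ∀ c : Fin (2 ^ n), Pj n m c =
        ((2 ^ n : ℝ))⁻¹ * ((2 ^ n : ℝ))⁻¹ * (if c = m then ((2 : ℝ) ^ n) else 0) := by
      intro c
      rw [Pj, cnt_eq hn, if_pos hm, apply_ite (fun x : ℕ => (x : ℝ))]
      push_cast
      ring_nf
    rw [Finset.sum_congr rfl (fun c _ => hpt c), ← Finset.mul_sum,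
        Finset.sum_ite_eq' univ m (fun _ => ((2 : ℝ) ^ n))]
    simp only [Finset.mem_univ, if_pos]
    field_simp
  · have hmne : m ≠ mL := by
      intro h; exact hm (by rw [h])
    have hpt : ∀ c : Fin (2 ^ n), Pj n m c =
        ((2 ^ n : ℝ))⁻¹ * ((2 ^ n : ℝ))⁻¹ * (if c = mL then (0:ℝ) else if c = m then 2 else 1) := by
      intro c
      rw [Pj, cnt_eq hn, if_neg hm]
      have hcL : ((c : ℕ) = 2 ^ n - 1) ↔ c = mL := by rw [Fin.ext_iff]
      by_cases h1 : c = mL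
      · rw [if_pos (hcL.2 h1), if_pos h1]; simp
      · rw [if_neg (fun h => h1 (hcL.1 h)), if_neg h1]
        by_cases h2 : c = m <;> simp [h2]
    rw [Finset.sum_congr rfl (fun c _ => hpt c), ← Finset.mul_sum, sum_aux mL m hmne]
    field_simp

lemma col_sum (hn : 1 ≤ n) (c : Fin (2 ^ n)) : ∑ m, Pj n m c = ((2 ^ n : ℝ))⁻¹ := by
  have hN := two_le_pow' hn
  have hNR : ((2 : ℝ) ^ n) ≠ 0 := by positivity
  have hNL : 2 ^ n - 1 < 2 ^ n := by omega
  set mL : Fin (2 ^ n) := ⟨2 ^ n - 1, hNL⟩ with hmL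
  have hLiff : ∀ x : Fin (2 ^ n), ((x : ℕ) = 2 ^ n - 1) ↔ x = mL := by
    intro x; rw [Fin.ext_iff]
  by_cases hc : (c : ℕ) = 2 ^ n - 1
  · have hcL : c = mL := (hLiff c).1 hc
    have hpt : ∀ m : Fin (2 ^ n), Pj n m c =
        ((2 ^ n : ℝ))⁻¹ * ((2 ^ n : ℝ))⁻¹ * (if m = mL then ((2 : ℝ) ^ n) else 0) := by
      intro m
      rw [Pj, cnt_eq hn]
      by_cases h1 : m = mL
      · rw [if_pos ((hLiff m).2 h1), if_pos (by rw [hcL, h1])]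
        rw [if_pos h1]; push_cast; ring
      · rw [if_neg (fun h => h1 ((hLiff m).1 h)), if_pos hc, if_neg h1]; simp
    rw [Finset.sum_congr rfl (fun m _ => hpt m), ← Finset.mul_sum,
        Finset.sum_ite_eq' univ mL (fun _ => ((2 : ℝ) ^ n))]
    simp only [Finset.mem_univ, if_pos]
    field_simp
  · have hcne : c ≠ mL := fun h => hc ((hLiff c).2 h)
    have hpt : ∀ m : Fin (2 ^ n), Pj n m c =
        ((2 ^ n : ℝ))⁻¹ * ((2 ^ n : ℝ))⁻¹ * (if m = mL then (0:ℝ) else if m = c then 2 else 1) := by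
      intro m
      rw [Pj, cnt_eq hn]
      by_cases h1 : m = mL
      · rw [if_pos ((hLiff m).2 h1), if_pos h1, if_neg (by rw [h1]; exact hcne)]
        simp
      · rw [if_neg (fun h => h1 ((hLiff m).1 h)), if_neg hc, if_neg h1]
        by_cases h2 : c = m
        · rw [if_pos h2, if_pos h2.symm]; norm_num
        · rw [if_neg h2, if_neg (fun h => h2 h.symm)]; norm_num
    rw [Finset.sum_congr rfl (fun m _ => hpt m), ← Finset.mul_sum, sum_aux mL c hcne]
    field_simp

def lastF (n : ℕ) : Fin (2 ^ n) := ⟨2 ^ n - 1, by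
  have : 0 < 2 ^ n := Nat.pow_pos (by norm_num)
  omega⟩

lemma term_eq (hn : 1 ≤ n) (m c : Fin (2 ^ n)) :
    Pj n m c * Real.logb 2 (Pj n m c / (((2 ^ n : ℝ))⁻¹ * ((2 ^ n : ℝ))⁻¹)) =
      if m = lastF n then (if c = lastF n then (n : ℝ) / (2 ^ n : ℝ) else 0)
      else (if c = m then 2 / ((2 : ℝ) ^ n) ^ 2 else 0) := by
  have hN := two_le_pow' hn
  have hNR : ((2 : ℝ) ^ n) ≠ 0 := by positivity
  have hLiff : ∀ x : Fin (2 ^ n), ((x : ℕ) = 2 ^ n - 1) ↔ x = lastF n := by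
    intro x; rw [Fin.ext_iff]; rfl
  by_cases hm : m = lastF n
  · rw [if_pos hm]
    by_cases hc : c = lastF n
    · rw [if_pos hc]
      have hP : Pj n m c = ((2 : ℝ) ^ n)⁻¹ := by
        rw [Pj, cnt_eq hn, if_pos ((hLiff m).2 hm), if_pos (by rw [hm, hc])]
        push_cast; field_simp
      rw [hP]
      have hr : ((2 : ℝ) ^ n)⁻¹ / (((2 ^ n : ℝ))⁻¹ * ((2 ^ n : ℝ))⁻¹) = (2 : ℝ) ^ n := by
        field_simp
      rw [hr, Real.logb_pow, Real.logb_self_eq_one (by norm_num)]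
      field_simp
    · have hP : Pj n m c = 0 := by
        rw [Pj, cnt_eq hn, if_pos ((hLiff m).2 hm),
          if_neg (fun h => hc (h.trans hm))]
        simp
      rw [if_neg hc, hP, zero_mul]
  · rw [if_neg hm]
    by_cases hc : c = lastF n
    · have hP : Pj n m c = 0 := by
        rw [Pj, cnt_eq hn, if_neg (fun h => hm ((hLiff m).1 h)), if_pos ((hLiff c).2 hc)]
        simp
      have hcm : ¬ c = m := by rw [hc]; exact fun h => hm h.symm
      rw [if_neg hcm, hP, zero_mul]
    · by_cases hcm : c = m
      · rw [if_pos hcm]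
        have hP : Pj n m c = 2 * (((2 : ℝ) ^ n) ^ 2)⁻¹ := by
          rw [Pj, cnt_eq hn, if_neg (fun h => hm ((hLiff m).1 h)),
            if_neg (fun h => hc ((hLiff c).1 h)), if_pos hcm]
          push_cast; ring
        rw [hP]
        have hr : 2 * (((2 : ℝ) ^ n) ^ 2)⁻¹ / (((2 ^ n : ℝ))⁻¹ * ((2 ^ n : ℝ))⁻¹) = 2 := by
          field_simp
        rw [hr, Real.logb_self_eq_one (by norm_num)]
        ring
      · rw [if_neg hcm]
        have hP : Pj n m c = (((2 : ℝ) ^ n) ^ 2)⁻¹ := by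
          rw [Pj, cnt_eq hn, if_neg (fun h => hm ((hLiff m).1 h)),
            if_neg (fun h => hc ((hLiff c).1 h)), if_neg hcm]
          push_cast; ring
        rw [hP]
        have hr : (((2 : ℝ) ^ n) ^ 2)⁻¹ / (((2 ^ n : ℝ))⁻¹ * ((2 ^ n : ℝ))⁻¹) = 1 := by
          field_simp
        rw [hr, Real.logb_one, mul_zero]

lemma MI_eq (hn : 1 ≤ n) :
    (∑ m : Fin (2 ^ n), ∑ c : Fin (2 ^ n),
      Pj n m c * Real.logb 2 (Pj n m c / ((∑ c', Pj n m c') * (∑ m', Pj n m' c)))) =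
      ((2 ^ n : ℝ))⁻¹ * ((n : ℝ) + 2 - ((2 : ℝ) ^ (n - 1))⁻¹) := by
  have hN := two_le_pow' hn
  have hNR : ((2 : ℝ) ^ n) ≠ 0 := by positivity
  have h1 : ∀ m c : Fin (2 ^ n),
      Pj n m c * Real.logb 2 (Pj n m c / ((∑ c', Pj n m c') * (∑ m', Pj n m' c))) =
      if m = lastF n then (if c = lastF n then (n : ℝ) / (2 ^ n : ℝ) else 0)
      else (if c = m then 2 / ((2 : ℝ) ^ n) ^ 2 else 0) := by
    intro m c
    rw [row_sum hn m, col_sum hn c, term_eq hn m c]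
  calc (∑ m : Fin (2 ^ n), ∑ c : Fin (2 ^ n),
      Pj n m c * Real.logb 2 (Pj n m c / ((∑ c', Pj n m c') * (∑ m', Pj n m' c))))
      = ∑ m : Fin (2 ^ n), ∑ c : Fin (2 ^ n),
        (if m = lastF n then (if c = lastF n then (n : ℝ) / (2 ^ n : ℝ) else 0)
          else (if c = m then 2 / ((2 : ℝ) ^ n) ^ 2 else 0)) := by
        exact Finset.sum_congr rfl fun m _ => Finset.sum_congr rfl fun c _ => h1 m c
    _ = ∑ m : Fin (2 ^ n),
        (if m = lastF n then (n : ℝ) / (2 ^ n : ℝ) else 2 / ((2 : ℝ) ^ n) ^ 2) := by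
        refine Finset.sum_congr rfl fun m _ => ?_
        by_cases hm : m = lastF n
        · rw [if_pos hm]
          simp only [if_pos hm]
          rw [Finset.sum_ite_eq' univ (lastF n) (fun _ => (n : ℝ) / (2 ^ n : ℝ))]
          simp
        · rw [if_neg hm]
          simp only [if_neg hm]
          rw [Finset.sum_ite_eq' univ m (fun _ => 2 / ((2 : ℝ) ^ n) ^ 2)]
          simp
    _ = ((n : ℝ) / (2 ^ n : ℝ) - 2 / ((2 : ℝ) ^ n) ^ 2) + (2 ^ n : ℕ) * (2 / ((2 : ℝ) ^ n) ^ 2) := by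
        have : ∀ m : Fin (2 ^ n),
            (if m = lastF n then (n : ℝ) / (2 ^ n : ℝ) else 2 / ((2 : ℝ) ^ n) ^ 2) =
            (if m = lastF n then (n : ℝ) / (2 ^ n : ℝ) - 2 / ((2 : ℝ) ^ n) ^ 2 else 0)
              + 2 / ((2 : ℝ) ^ n) ^ 2 := by
          intro m; by_cases hm : m = lastF n <;> simp [hm]
        rw [Finset.sum_congr rfl (fun m _ => this m), Finset.sum_add_distrib,
          Finset.sum_ite_eq' univ (lastF n)
            (fun _ => (n : ℝ) / (2 ^ n : ℝ) - 2 / ((2 : ℝ) ^ n) ^ 2)]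
        simp [Finset.card_univ]
    _ = ((2 ^ n : ℝ))⁻¹ * ((n : ℝ) + 2 - ((2 : ℝ) ^ (n - 1))⁻¹) := by
        have hsplit : (2 : ℝ) ^ n = 2 * 2 ^ (n - 1) := by
          rw [← pow_succ']
          congr 1
          omega
        have h2 : ((2 : ℝ) ^ (n - 1)) ≠ 0 := by positivity
        push_cast
        rw [hsplit]
        field_simp
        ring

lemma Pj_nonneg (m c : Fin (2 ^ n)) : 0 ≤ Pj n m c := by
  rw [Pj]
  positivity

lemma sum_if (a b : ℝ) (x0 : Fin (2 ^ n)) :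
    (∑ x : Fin (2 ^ n), if x = x0 then a else b) = a + ((2 ^ n : ℝ) - 1) * b := by
  have : ∀ x : Fin (2 ^ n), (if x = x0 then a else b) = (if x = x0 then a - b else 0) + b := by
    intro x; by_cases h : x = x0 <;> simp [h]
  rw [Finset.sum_congr rfl (fun x _ => this x), Finset.sum_add_distrib,
    Finset.sum_ite_eq' univ x0 (fun _ => a - b)]
  simp [Finset.card_univ]
  ring

lemma maxCorr_Pj (hn : 1 ≤ n) : maxCorr (Pj n) = 1 := by
  have hN := two_le_pow' hn
  have hNR : ((2 : ℝ) ^ n) ≠ 0 := by positivity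
  have hN1 : (1 : ℝ) ≤ (2 : ℝ) ^ n - 1 := by
    have : (2 : ℝ) ≤ (2 : ℝ) ^ n := by
      calc (2:ℝ) = 2 ^ 1 := by norm_num
      _ ≤ 2 ^ n := by
        apply pow_le_pow_right₀ (by norm_num) hn
    linarith
  set s : ℝ := Real.sqrt ((2 : ℝ) ^ n - 1) with hsdef
  have hs2 : s ^ 2 = (2 : ℝ) ^ n - 1 := Real.sq_sqrt (by linarith)
  have hspos : 0 < s := Real.sqrt_pos.2 (by linarith)
  have hsne : s ≠ 0 := ne_of_gt hspos
  have hNs : (2 : ℝ) ^ n = s ^ 2 + 1 := by rw [hs2]; ring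
  set h : Fin (2 ^ n) → ℝ := fun x => if x = lastF n then s else -s⁻¹ with hhdef
  -- first moment
  have hmean : (∑ x : Fin (2 ^ n), ∑ y : Fin (2 ^ n), Pj n x y * h x) = 0 := by
    have h1 : ∀ x : Fin (2 ^ n), (∑ y : Fin (2 ^ n), Pj n x y * h x)
        = ((2 ^ n : ℝ))⁻¹ * h x := by
      intro x; rw [← Finset.sum_mul, row_sum hn]
    rw [Finset.sum_congr rfl (fun x _ => h1 x), ← Finset.mul_sum, hhdef]
    rw [sum_if s (-s⁻¹) (lastF n)]
    have : s + ((2 ^ n : ℝ) - 1) * (-s⁻¹) = 0 := by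
      rw [hNs]
      field_simp
      ring
    rw [this, mul_zero]
  have hmean2 : (∑ x : Fin (2 ^ n), ∑ y : Fin (2 ^ n), Pj n x y * h y) = 0 := by
    rw [Finset.sum_comm]
    have h1 : ∀ y : Fin (2 ^ n), (∑ x : Fin (2 ^ n), Pj n x y * h y)
        = ((2 ^ n : ℝ))⁻¹ * h y := by
      intro y; rw [← Finset.sum_mul, col_sum hn]
    rw [Finset.sum_congr rfl (fun y _ => h1 y), ← Finset.mul_sum, hhdef]
    rw [sum_if s (-s⁻¹) (lastF n)]
    have : s + ((2 ^ n : ℝ) - 1) * (-s⁻¹) = 0 := by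
      rw [hNs]
      field_simp
      ring
    rw [this, mul_zero]
  -- second moments
  have hsq : ∀ x : Fin (2 ^ n), (h x) ^ 2 = if x = lastF n then s ^ 2 else (s⁻¹) ^ 2 := by
    intro x; rw [hhdef]; by_cases hx : x = lastF n <;> simp [hx]
  have hvar : (∑ x : Fin (2 ^ n), ∑ y : Fin (2 ^ n), Pj n x y * (h x) ^ 2) = 1 := by
    have h1 : ∀ x : Fin (2 ^ n), (∑ y : Fin (2 ^ n), Pj n x y * (h x) ^ 2)
        = ((2 ^ n : ℝ))⁻¹ * (h x) ^ 2 := by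
      intro x; rw [← Finset.sum_mul, row_sum hn]
    rw [Finset.sum_congr rfl (fun x _ => h1 x), ← Finset.mul_sum]
    rw [Finset.sum_congr rfl (fun x _ => hsq x), sum_if (s ^ 2) ((s⁻¹) ^ 2) (lastF n), hNs]
    field_simp
    ring
  have hvar2 : (∑ x : Fin (2 ^ n), ∑ y : Fin (2 ^ n), Pj n x y * (h y) ^ 2) = 1 := by
    rw [Finset.sum_comm]
    have h1 : ∀ y : Fin (2 ^ n), (∑ x : Fin (2 ^ n), Pj n x y * (h y) ^ 2)
        = ((2 ^ n : ℝ))⁻¹ * (h y) ^ 2 := by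
      intro y; rw [← Finset.sum_mul, col_sum hn]
    rw [Finset.sum_congr rfl (fun y _ => h1 y), ← Finset.mul_sum]
    rw [Finset.sum_congr rfl (fun y _ => hsq y), sum_if (s ^ 2) ((s⁻¹) ^ 2) (lastF n), hNs]
    field_simp
    ring
  -- correlation equals 1
  have hcorr : (∑ x : Fin (2 ^ n), ∑ y : Fin (2 ^ n), Pj n x y * h x * h y) = 1 := by
    have hpt : ∀ x y : Fin (2 ^ n), Pj n x y * h x * h y = Pj n x y * (h x) ^ 2 := by
      intro m c
      by_cases hz : (univ.filter fun k : Fin (2 ^ n) => modEnc n k m = c).card = 0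
      · have : Pj n m c = 0 := by rw [Pj, hz]; simp
        rw [this]; ring
      · have hiff : (m = lastF n) ↔ (c = lastF n) := by
          rw [cnt_eq hn] at hz
          have hLiff : ∀ x : Fin (2 ^ n), ((x : ℕ) = 2 ^ n - 1) ↔ x = lastF n := by
            intro x; rw [Fin.ext_iff]; rfl
          by_cases hm : (m : ℕ) = 2 ^ n - 1
          · rw [if_pos hm] at hz
            by_cases hcm : c = m
            · constructor <;> intro _
              · rw [hcm]; exact (hLiff m).1 hm
              · exact (hLiff m).1 hm
            · rw [if_neg hcm] at hz; exact absurd rfl hz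
          · rw [if_neg hm] at hz
            by_cases hc : (c : ℕ) = 2 ^ n - 1
            · rw [if_pos hc] at hz; exact absurd rfl hz
            · constructor <;> intro hh
              · exact absurd ((hLiff m).2 hh) hm
              · exact absurd ((hLiff c).2 hh) hc
        have : h m = h c := by
          simp only [hhdef]
          by_cases hm : m = lastF n
          · rw [if_pos hm, if_pos (hiff.1 hm)]
          · rw [if_neg hm, if_neg (fun hh => hm (hiff.2 hh))]
        rw [this]; ring
    rw [Finset.sum_congr rfl (fun x _ => Finset.sum_congr rfl (fun y _ => hpt x y))]
    exact hvar
  -- conclusion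
  rw [maxCorr]
  apply IsGreatest.csSup_eq
  constructor
  · exact ⟨h, h, hmean, hmean2, hvar, hvar2, hcorr.symm⟩
  · rintro r ⟨f, g, _, _, hf2, hg2, hr⟩
    set u : Fin (2 ^ n) × Fin (2 ^ n) → ℝ := fun p => Real.sqrt (Pj n p.1 p.2) * f p.1 with hu
    set v : Fin (2 ^ n) × Fin (2 ^ n) → ℝ := fun p => Real.sqrt (Pj n p.1 p.2) * g p.2 with hv
    have huv : ∀ p : Fin (2 ^ n) × Fin (2 ^ n), u p * v p = Pj n p.1 p.2 * f p.1 * g p.2 := by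
      intro p
      simp only [hu, hv]
      have hq := Real.mul_self_sqrt (Pj_nonneg p.1 p.2)
      linear_combination (f p.1 * g p.2) * hq
    have hu2 : ∀ p : Fin (2 ^ n) × Fin (2 ^ n), (u p) ^ 2 = Pj n p.1 p.2 * (f p.1) ^ 2 := by
      intro p; simp only [hu]; rw [mul_pow, Real.sq_sqrt (Pj_nonneg p.1 p.2)]
    have hv2 : ∀ p : Fin (2 ^ n) × Fin (2 ^ n), (v p) ^ 2 = Pj n p.1 p.2 * (g p.2) ^ 2 := by
      intro p; simp only [hv]; rw [mul_pow, Real.sq_sqrt (Pj_nonneg p.1 p.2)]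
    have hsum1 : (∑ p : Fin (2 ^ n) × Fin (2 ^ n), u p * v p) = r := by
      rw [Finset.sum_congr rfl (fun p _ => huv p), hr, Fintype.sum_prod_type]
    have hsum2 : (∑ p : Fin (2 ^ n) × Fin (2 ^ n), (u p) ^ 2) = 1 := by
      rw [Finset.sum_congr rfl (fun p _ => hu2 p), ← hf2, Fintype.sum_prod_type]
    have hsum3 : (∑ p : Fin (2 ^ n) × Fin (2 ^ n), (v p) ^ 2) = 1 := by
      rw [Finset.sum_congr rfl (fun p _ => hv2 p), ← hg2, Fintype.sum_prod_type]
    have hcs := Finset.sum_mul_sq_le_sq_mul_sq univ u v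
    rw [hsum1, hsum2, hsum3] at hcs
    nlinarith [hcs]

end

theorem stmt19 (n : ℕ) (hn : 1 ≤ n) :
    maxCorr (fun (m c : Fin (2 ^ n)) =>
        ((2 ^ n : ℝ))⁻¹ * ((2 ^ n : ℝ))⁻¹ *
          ((univ.filter fun k : Fin (2 ^ n) => modEnc n k m = c).card : ℝ)) = 1 ∧
    (∑ m : Fin (2 ^ n), ∑ c : Fin (2 ^ n),
        (((2 ^ n : ℝ))⁻¹ * ((2 ^ n : ℝ))⁻¹ *
            ((univ.filter fun k : Fin (2 ^ n) => modEnc n k m = c).card : ℝ)) *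
          Real.logb 2
            ((((2 ^ n : ℝ))⁻¹ * ((2 ^ n : ℝ))⁻¹ *
                ((univ.filter fun k : Fin (2 ^ n) => modEnc n k m = c).card : ℝ)) /
              ((∑ c', ((2 ^ n : ℝ))⁻¹ * ((2 ^ n : ℝ))⁻¹ *
                  ((univ.filter fun k : Fin (2 ^ n) => modEnc n k m = c').card : ℝ)) *
                (∑ m', ((2 ^ n : ℝ))⁻¹ * ((2 ^ n : ℝ))⁻¹ *
                  ((univ.filter fun k : Fin (2 ^ n) => modEnc n k m' = c).card : ℝ))))) =
      ((2 ^ n : ℝ))⁻¹ * ((n : ℝ) + 2 - ((2 : ℝ) ^ (n - 1))⁻¹) := by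
  constructor
  · exact maxCorr_Pj hn
  · exact MI_eq hn
end
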